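/- arXiv:2112.14686 — 8 statements merged into one kernel-verified Lean document; each statement's English description precedes it below -/
import Mathlib

section
/- Let N be a von Neumann algebra on H with ΓNΓ = N. If A ∈ N and A' is a bounded operator commuting with every element of N^t (i.e. A' ∈ (N^t)'), then A'A = AA' − 2A₋A'₋; equivalently, the even parts of A and A' commute with the even and odd parts of the other, while the odd part of A anticommutes with the odd part of A'. -/
/-- Let `N` be a von Neumann algebra on `H` with `ΓNΓ = N`. If `A ∈ N` and
`A'` is a bounded operator commuting with every element of `N^t` (i.e. `A' ∈ (N^t)'`), then
`A'A = AA' − 2A₋A'₋`; equivalently, the even parts of `A` and `A'` commute with the even and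
odd parts of the other, while the odd part of `A` anticommutes with the odd part of `A'`. -/
theorem graded_commutation_relation
    {H : Type*} [NormedAddCommGroup H] [InnerProductSpace ℂ H] [CompleteSpace H]
    (Γ : H →L[ℂ] H) (hΓsa : ContinuousLinearMap.adjoint Γ = Γ) (hΓ2 : Γ * Γ = 1)
    (Z : H →L[ℂ] H)
    (hZ : Z = ((1 - Complex.I) / 2) • (1 : H →L[ℂ] H) + ((1 + Complex.I) / 2) • Γ)
    (N : VonNeumannAlgebra H)
    (hN : ∀ B ∈ N, Γ * B * Γ ∈ N)
    (A A' : H →L[ℂ] H) (hA : A ∈ N)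
    (hA' : A' ∈ Set.centralizer
      ((fun B => Z * B * ContinuousLinearMap.adjoint Z) '' (N : Set (H →L[ℂ] H))))
    -- even and odd parts
    (Ap Am A'p A'm : H →L[ℂ] H)
    (hAp : Ap = (2⁻¹ : ℂ) • (A + Γ * A * Γ)) (hAm : Am = (2⁻¹ : ℂ) • (A - Γ * A * Γ))
    (hA'p : A'p = (2⁻¹ : ℂ) • (A' + Γ * A' * Γ)) (hA'm : A'm = (2⁻¹ : ℂ) • (A' - Γ * A' * Γ)) :
    A' * A = A * A' - (2 : ℂ) • (Am * A'm) ∧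
    Ap * A'p = A'p * Ap ∧
    Ap * A'm = A'm * Ap ∧
    Am * A'p = A'p * Am ∧
    Am * A'm = - (A'm * Am) := by
  have hΓ2' : ∀ W : H →L[ℂ] H, Γ * (Γ * W) = W := fun W => by
    rw [← mul_assoc, hΓ2, one_mul]
  -- the adjoint of Z
  have hZs : ContinuousLinearMap.adjoint Z
      = ((1 + Complex.I) / 2) • (1 : H →L[ℂ] H) + ((1 - Complex.I) / 2) • Γ := by
    rw [← ContinuousLinearMap.star_eq_adjoint, hZ, star_add, star_smul, star_smul, star_one,
      ContinuousLinearMap.star_eq_adjoint, hΓsa]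
    congr 2 <;> simp [Complex.ext_iff]
  -- key formula for the twist
  have key : ∀ B : H →L[ℂ] H, Z * B * ContinuousLinearMap.adjoint Z
      = (2⁻¹ : ℂ) • (B + Γ * B * Γ) + (2⁻¹ * Complex.I) • (Γ * B - B * Γ) := by
    intro B
    rw [hZs, hZ]
    simp only [mul_add, add_mul, smul_mul_assoc, mul_smul_comm, one_mul, mul_one, smul_add,
      smul_sub, smul_smul, mul_assoc]
    match_scalars <;> (ring_nf; try simp only [Complex.I_sq]; try ring1)
  -- twists of A and Γ A Γ
  have e1 : Z * A * ContinuousLinearMap.adjoint Z = Ap + Complex.I • (Γ * Am) := by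
    rw [key, hAp, hAm]
    simp only [mul_add, add_mul, mul_sub, sub_mul, mul_smul_comm, smul_mul_assoc, smul_add,
      smul_sub, smul_smul, mul_assoc, hΓ2', hΓ2, mul_one, one_mul]
    module
  have e2 : Z * (Γ * A * Γ) * ContinuousLinearMap.adjoint Z = Ap - Complex.I • (Γ * Am) := by
    rw [key, hAp, hAm]
    simp only [mul_add, add_mul, mul_sub, sub_mul, mul_smul_comm, smul_mul_assoc, smul_add,
      smul_sub, smul_smul, mul_assoc, hΓ2', hΓ2, mul_one, one_mul]
    module
  -- commutation hypotheses extracted from the centralizer condition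
  have c1 : (Ap + Complex.I • (Γ * Am)) * A' = A' * (Ap + Complex.I • (Γ * Am)) := by
    rw [← e1]; exact hA' _ ⟨A, hA, rfl⟩
  have c2 : (Ap - Complex.I • (Γ * Am)) * A' = A' * (Ap - Complex.I • (Γ * Am)) := by
    rw [← e2]; exact hA' _ ⟨Γ * A * Γ, hN A hA, rfl⟩
  -- A' commutes with Ap
  have hApc : Ap * A' = A' * Ap := by
    have h2 : (2 : ℂ) • (Ap * A') = (2 : ℂ) • (A' * Ap) := by
      calc (2 : ℂ) • (Ap * A')
          = (Ap + Complex.I • (Γ * Am)) * A' + (Ap - Complex.I • (Γ * Am)) * A' := by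
            simp only [add_mul, sub_mul, smul_mul_assoc]; module
        _ = A' * (Ap + Complex.I • (Γ * Am)) + A' * (Ap - Complex.I • (Γ * Am)) := by
            rw [c1, c2]
        _ = (2 : ℂ) • (A' * Ap) := by
            simp only [mul_add, mul_sub, mul_smul_comm]; module
    exact smul_right_injective _ (two_ne_zero) h2
  -- A' commutes with Γ * Am
  have hXc : (Γ * Am) * A' = A' * (Γ * Am) := by
    have h2 : ((2 : ℂ) * Complex.I) • ((Γ * Am) * A')
        = ((2 : ℂ) * Complex.I) • (A' * (Γ * Am)) := by
      calc ((2 : ℂ) * Complex.I) • ((Γ * Am) * A')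
          = (Ap + Complex.I • (Γ * Am)) * A' - (Ap - Complex.I • (Γ * Am)) * A' := by
            simp only [add_mul, sub_mul, smul_mul_assoc]; module
        _ = A' * (Ap + Complex.I • (Γ * Am)) - A' * (Ap - Complex.I • (Γ * Am)) := by
            rw [c1, c2]
        _ = ((2 : ℂ) * Complex.I) • (A' * (Γ * Am)) := by
            simp only [mul_add, mul_sub, mul_smul_comm]; module
    refine smul_right_injective _ ?_ h2
    simp [Complex.I_ne_zero]
  -- conjugation by Γ of even/odd parts
  have hApΓ : Γ * Ap * Γ = Ap := by
    rw [hAp]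
    simp only [mul_add, add_mul, mul_smul_comm, smul_mul_assoc, smul_add, mul_assoc, hΓ2',
      hΓ2, mul_one]
    module
  have hAmΓ' : Am * Γ = -(Γ * Am) := by
    rw [hAm]
    simp only [mul_sub, sub_mul, mul_smul_comm, smul_mul_assoc, smul_sub, mul_assoc, hΓ2',
      hΓ2, mul_one, smul_neg, neg_sub]
    try module
  have hA'pΓ : Γ * A'p * Γ = A'p := by
    rw [hA'p]
    simp only [mul_add, add_mul, mul_smul_comm, smul_mul_assoc, smul_add, mul_assoc, hΓ2',
      hΓ2, mul_one]
    module
  have hA'mΓ : Γ * A'm * Γ = -A'm := by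
    rw [hA'm]
    simp only [mul_sub, sub_mul, mul_smul_comm, smul_mul_assoc, smul_sub, mul_assoc, hΓ2',
      hΓ2, mul_one, smul_neg, neg_sub]
    try module
  have conj_mul : ∀ X Y : H →L[ℂ] H, (Γ * X * Γ) * (Γ * Y * Γ) = Γ * (X * Y) * Γ := by
    intro X Y
    simp only [mul_assoc, hΓ2']
  -- ΓA'Γ commutes with Ap
  have hApc' : Ap * (Γ * A' * Γ) = (Γ * A' * Γ) * Ap := by
    have h : Γ * (Ap * A') * Γ = Γ * (A' * Ap) * Γ := by rw [hApc]
    rw [← conj_mul, ← conj_mul, hApΓ] at h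
    exact h
  -- ΓA'Γ commutes with Γ * Am
  have hXc' : (Γ * Am) * (Γ * A' * Γ) = (Γ * A' * Γ) * (Γ * Am) := by
    have h : Γ * ((Γ * Am) * A') * Γ = Γ * (A' * (Γ * Am)) * Γ := by rw [hXc]
    rw [← conj_mul (Γ * Am) A', ← conj_mul A' (Γ * Am)] at h
    have hg : Γ * (Γ * Am) * Γ = -(Γ * Am) := by rw [hΓ2', hAmΓ']
    rw [hg, neg_mul, mul_neg, neg_inj] at h
    exact h
  -- commutation with the even and odd parts of A'
  have h_pp : Ap * A'p = A'p * Ap := by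
    rw [hA'p]
    simp only [mul_smul_comm, smul_mul_assoc, mul_add, add_mul, hApc, hApc']
  have h_pm : Ap * A'm = A'm * Ap := by
    rw [hA'm]
    simp only [mul_smul_comm, smul_mul_assoc, mul_sub, sub_mul, hApc, hApc']
  have hX_p : (Γ * Am) * A'p = A'p * (Γ * Am) := by
    rw [hA'p]
    simp only [mul_smul_comm, smul_mul_assoc, mul_add, add_mul, hXc, hXc']
  have hX_m : (Γ * Am) * A'm = A'm * (Γ * Am) := by
    rw [hA'm]
    simp only [mul_smul_comm, smul_mul_assoc, mul_sub, sub_mul, hXc, hXc']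
  -- swap rules for Γ past A'p and A'm
  have hswap_p : Γ * A'p = A'p * Γ := by
    calc Γ * A'p = (Γ * A'p * Γ) * Γ := by rw [mul_assoc, hΓ2, mul_one]
      _ = A'p * Γ := by rw [hA'pΓ]
  have hswap_m : Γ * A'm = -(A'm * Γ) := by
    calc Γ * A'm = (Γ * A'm * Γ) * Γ := by rw [mul_assoc, hΓ2, mul_one]
      _ = -(A'm * Γ) := by rw [hA'mΓ, neg_mul]
  -- Am commutes with A'p
  have h_mp : Am * A'p = A'p * Am := by
    have h : Γ * (Am * A'p) = Γ * (A'p * Am) := by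
      calc Γ * (Am * A'p) = (Γ * Am) * A'p := (mul_assoc _ _ _).symm
        _ = A'p * (Γ * Am) := hX_p
        _ = (A'p * Γ) * Am := (mul_assoc _ _ _).symm
        _ = (Γ * A'p) * Am := by rw [hswap_p]
        _ = Γ * (A'p * Am) := mul_assoc _ _ _
    calc Am * A'p = Γ * (Γ * (Am * A'p)) := (hΓ2' _).symm
      _ = Γ * (Γ * (A'p * Am)) := by rw [h]
      _ = A'p * Am := hΓ2' _
  -- Am anticommutes with A'm
  have h_mm : Am * A'm = -(A'm * Am) := by
    have h : Γ * (Am * A'm) = Γ * (-(A'm * Am)) := by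
      calc Γ * (Am * A'm) = (Γ * Am) * A'm := (mul_assoc _ _ _).symm
        _ = A'm * (Γ * Am) := hX_m
        _ = (A'm * Γ) * Am := (mul_assoc _ _ _).symm
        _ = (-(Γ * A'm)) * Am := by rw [hswap_m, neg_neg]
        _ = Γ * (-(A'm * Am)) := by rw [neg_mul, mul_neg, mul_assoc]
    calc Am * A'm = Γ * (Γ * (Am * A'm)) := (hΓ2' _).symm
      _ = Γ * (Γ * (-(A'm * Am))) := by rw [h]
      _ = -(A'm * Am) := hΓ2' _
  -- decomposition of A and A'
  have hAeq : A = Ap + Am := by rw [hAp, hAm]; module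
  have hA'eq : A' = A'p + A'm := by rw [hA'p, hA'm]; module
  -- the main identity
  refine ⟨?_, h_pp, h_pm, h_mp, h_mm⟩
  have h_mm' : A'm * Am = -(Am * A'm) := by rw [h_mm, neg_neg]
  rw [hAeq, hA'eq]
  simp only [add_mul, mul_add]
  rw [← h_pp, ← h_mp, ← h_pm, h_mm']
  module
end

section
/- Let J be an antiunitary involution on H (a conjugate-linear, surjective, inner-product-conjugating map with J² = 1) that commutes with Γ. Then ZJ is again an antiunitary involution, and for every bounded operator A on H one has (ZJ)(ZAZ*)(ZJ) = JAJ. In particular, if N is a von Neumann algebra with ΓNΓ = N and JNJ = N', then (ZJ) N^t (ZJ) = N'. -/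
open scoped InnerProductSpace

/-- Let `J` be an antiunitary involution on `H` (a conjugate-linear, surjective,
inner-product-conjugating map with `J² = 1`) that commutes with `Γ`. Then `ZJ` is again an
antiunitary involution, and for every bounded operator `A` on `H` one has
`(ZJ)(ZAZ*)(ZJ) = JAJ`. In particular, if `N` is a von Neumann algebra with `ΓNΓ = N` and
`JNJ = N'`, then `(ZJ) N^t (ZJ) = N'`. -/
theorem twisted_reflection_properties
    {H : Type*} [NormedAddCommGroup H] [InnerProductSpace ℂ H] [CompleteSpace H]
    (Γ : H →L[ℂ] H) (hΓsa : ContinuousLinearMap.adjoint Γ = Γ) (hΓ2 : Γ * Γ = 1)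
    (Z : H →L[ℂ] H)
    (hZ : Z = ((1 - Complex.I) / 2) • (1 : H →L[ℂ] H) + ((1 + Complex.I) / 2) • Γ)
    -- J is an antiunitary involution commuting with Γ
    (J : H → H)
    (hJadd : ∀ x y, J (x + y) = J x + J y)
    (hJsmul : ∀ (c : ℂ) (x : H), J (c • x) = (starRingEnd ℂ c) • J x)
    (hJinv : ∀ x, J (J x) = x)
    (hJinner : ∀ x y : H, ⟪J x, J y⟫_ℂ = ⟪y, x⟫_ℂ)
    (hJΓ : ∀ x, J (Γ x) = Γ (J x))
    -- the composite map K = Z ∘ J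
    (K : H → H) (hK : K = fun x => Z (J x)) :
    -- K is an antiunitary involution
    (∀ x y, K (x + y) = K x + K y) ∧
    (∀ (c : ℂ) (x : H), K (c • x) = (starRingEnd ℂ c) • K x) ∧
    (∀ x, K (K x) = x) ∧
    (∀ x y : H, ⟪K x, K y⟫_ℂ = ⟪y, x⟫_ℂ) ∧
    -- (ZJ)(Z A Z*)(ZJ) = J A J
    (∀ (A : H →L[ℂ] H) (x : H),
      K ((Z * A * ContinuousLinearMap.adjoint Z) (K x)) = J (A (J x))) ∧
    -- if in addition JNJ = N', then (ZJ) N^t (ZJ) = N'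
    (∀ N : VonNeumannAlgebra H,
      (∀ B ∈ N, Γ * B * Γ ∈ N) →
      (∀ B' : H →L[ℂ] H, B' ∈ N.commutant ↔ ∃ B ∈ N, ∀ x, B' x = J (B (J x))) →
      (∀ B' : H →L[ℂ] H, B' ∈ N.commutant ↔
        ∃ B ∈ N, ∀ x, B' x = K ((Z * B * ContinuousLinearMap.adjoint Z) (K x)))) := by
  have hone : ContinuousLinearMap.adjoint (1 : H →L[ℂ] H) = 1 := by
    rw [ContinuousLinearMap.one_def, ContinuousLinearMap.adjoint_id]
  have hca : (starRingEnd ℂ) ((1 - Complex.I) / 2) = (1 + Complex.I) / 2 := by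
    simp [Complex.ext_iff, map_ofNat]
  have hcb : (starRingEnd ℂ) ((1 + Complex.I) / 2) = (1 - Complex.I) / 2 := by
    simp [Complex.ext_iff, map_ofNat]
  have c1 : (1 - Complex.I) / 2 * ((1 + Complex.I) / 2)
      + (1 + Complex.I) / 2 * ((1 - Complex.I) / 2) = 1 := by
    simp [Complex.ext_iff]; ring_nf; simp
  have c2 : (1 - Complex.I) / 2 * ((1 - Complex.I) / 2)
      + (1 + Complex.I) / 2 * ((1 + Complex.I) / 2) = 0 := by
    simp [Complex.ext_iff]; ring_nf; simp
  -- the adjoint of Z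
  have hZstar : ContinuousLinearMap.adjoint Z
      = ((1 + Complex.I) / 2) • (1 : H →L[ℂ] H) + ((1 - Complex.I) / 2) • Γ := by
    rw [hZ, map_add, LinearIsometryEquiv.map_smulₛₗ, LinearIsometryEquiv.map_smulₛₗ,
      hone, hΓsa, hca, hcb]
  -- product of two linear combinations of 1 and Γ
  have prod : ∀ a b c d : ℂ,
      (a • (1 : H →L[ℂ] H) + b • Γ) * (c • (1 : H →L[ℂ] H) + d • Γ)
        = (a * c + b * d) • (1 : H →L[ℂ] H) + (a * d + b * c) • Γ := by
    intro a b c d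
    simp only [add_mul, mul_add, smul_mul_assoc, mul_smul_comm, one_mul, mul_one, hΓ2,
      smul_smul, add_smul]
    module
  -- Z is unitary
  have hZZs : Z * ContinuousLinearMap.adjoint Z = 1 := by
    rw [hZstar, hZ, prod]
    rw [c1, show (1 - Complex.I) / 2 * ((1 - Complex.I) / 2)
        + (1 + Complex.I) / 2 * ((1 + Complex.I) / 2) = 0 from c2]
    simp
  have hZsZ : ContinuousLinearMap.adjoint Z * Z = 1 := by
    rw [hZstar, hZ, prod]
    rw [show (1 + Complex.I) / 2 * ((1 - Complex.I) / 2)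
        + (1 - Complex.I) / 2 * ((1 + Complex.I) / 2) = 1 by linear_combination c1]
    rw [show (1 + Complex.I) / 2 * ((1 + Complex.I) / 2)
        + (1 - Complex.I) / 2 * ((1 - Complex.I) / 2) = 0 by linear_combination c2]
    simp
  have hZsZx : ∀ x : H, ContinuousLinearMap.adjoint Z (Z x) = x := fun x => by
    have := congrArg (fun T : H →L[ℂ] H => T x) hZsZ
    simpa using this
  have hZZsx : ∀ x : H, Z (ContinuousLinearMap.adjoint Z x) = x := fun x => by
    have := congrArg (fun T : H →L[ℂ] H => T x) hZZs
    simpa using this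
  -- J intertwines Z and Z*
  have hJZ : ∀ x, J (Z x) = ContinuousLinearMap.adjoint Z (J x) := by
    intro x
    rw [hZstar, hZ]
    simp only [ContinuousLinearMap.add_apply, ContinuousLinearMap.smul_apply,
      ContinuousLinearMap.one_apply, hJadd, hJsmul, hJΓ, hca, hcb]
  -- the five properties
  have p1 : ∀ x y, K (x + y) = K x + K y := by
    intro x y; simp [hK, hJadd]
  have p2 : ∀ (c : ℂ) (x : H), K (c • x) = (starRingEnd ℂ c) • K x := by
    intro c x; simp [hK, hJsmul]
  have p3 : ∀ x, K (K x) = x := by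
    intro x; simp only [hK]
    rw [hJZ, hZZsx, hJinv]
  have p4 : ∀ x y : H, ⟪K x, K y⟫_ℂ = ⟪y, x⟫_ℂ := by
    intro x y; simp only [hK]
    rw [← ContinuousLinearMap.adjoint_inner_right, hZsZx, hJinner]
  have p5 : ∀ (A : H →L[ℂ] H) (x : H),
      K ((Z * A * ContinuousLinearMap.adjoint Z) (K x)) = J (A (J x)) := by
    intro A x
    simp only [hK, ContinuousLinearMap.mul_apply]
    rw [hZsZx, hJZ, hZZsx]
  refine ⟨p1, p2, p3, p4, p5, ?_⟩
  intro N _ hcomm B'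
  rw [hcomm B']
  exact ⟨fun ⟨B, hB, hx⟩ => ⟨B, hB, fun x => by rw [hx x, p5]⟩,
    fun ⟨B, hB, hx⟩ => ⟨B, hB, fun x => by rw [hx x, p5]⟩⟩
end

section
/- Let U : ℝ² → (unitary operators on H) be a group homomorphism whose values all commute with Γ, and let M be a von Neumann algebra on H with ΓMΓ = M and U(x) M U(x)* ⊆ M for every x in the right wedge W_R. For x ∈ ℝ² set M_x := U(x) M U(x)*, and for y − x ∈ W_R define F(O_{x,y}) := M_x^t ∩ M_y'. Then the net F is twisted-local in the following sense: if x, y, z, w ∈ ℝ² with y − x ∈ W_R and w − z ∈ W_R, and if either x − w ∈ W_R or z − y ∈ W_R (so that O_{z,w} lies spacelike to O_{x,y}), then every element of F(O_{z,w}) commutes with every element of F(O_{x,y})^t, i.e. F(O_{z,w}) ⊆ (F(O_{x,y})^t)'. -/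
/-- Let `U : ℝ² → (unitaries on H)` be a group homomorphism whose values
commute with `Γ`, and `M` a von Neumann algebra with `ΓMΓ = M` and `U(x) M U(x)* ⊆ M` for
every `x` in the right wedge `W_R = {x : |x⁰| < x¹}`. For `x ∈ ℝ²` set `M_x := U(x) M U(x)*`,
and for `y − x ∈ W_R` define `F(O_{x,y}) := M_x^t ∩ M_y'`. Then the net `F` is twisted-local:
if `y − x ∈ W_R`, `w − z ∈ W_R`, and either `x − w ∈ W_R` or `z − y ∈ W_R`, then
`F(O_{z,w}) ⊆ (F(O_{x,y})^t)'`. -/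
theorem twisted_locality_of_net
    {H : Type*} [NormedAddCommGroup H] [InnerProductSpace ℂ H] [CompleteSpace H]
    (Γ : H →L[ℂ] H) (hΓsa : ContinuousLinearMap.adjoint Γ = Γ) (hΓ2 : Γ * Γ = 1)
    (Z : H →L[ℂ] H)
    (hZ : Z = ((1 - Complex.I) / 2) • (1 : H →L[ℂ] H) + ((1 + Complex.I) / 2) • Γ)
    -- the unitary translation group, commuting with Γ
    (U : ℝ × ℝ → (H →L[ℂ] H))
    (hU0 : U 0 = 1)
    (hUadd : ∀ a b : ℝ × ℝ, U (a + b) = U a * U b)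
    (hUunit : ∀ a : ℝ × ℝ,
      ContinuousLinearMap.adjoint (U a) * U a = 1 ∧ U a * ContinuousLinearMap.adjoint (U a) = 1)
    (hUΓ : ∀ a : ℝ × ℝ, U a * Γ = Γ * U a)
    -- the right wedge
    (WR : Set (ℝ × ℝ)) (hWR : WR = {a : ℝ × ℝ | |a.1| < a.2})
    -- the wedge algebra and its translates
    (M : VonNeumannAlgebra H)
    (hMΓ : ∀ B ∈ M, Γ * B * Γ ∈ M)
    (Mx : ℝ × ℝ → Set (H →L[ℂ] H))
    (hMx : Mx = fun a =>
      (fun B => U a * B * ContinuousLinearMap.adjoint (U a)) '' (M : Set (H →L[ℂ] H)))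
    (hMwedge : ∀ a ∈ WR, Mx a ⊆ (M : Set (H →L[ℂ] H)))
    -- the twisted double cone algebras
    (F : ℝ × ℝ → ℝ × ℝ → Set (H →L[ℂ] H))
    (hF : F = fun a b =>
      ((fun B => Z * B * ContinuousLinearMap.adjoint Z) '' (Mx a)) ∩ Set.centralizer (Mx b))
    -- spacelike separated double cones
    (x y z w : ℝ × ℝ) (hxy : y - x ∈ WR) (hzw : w - z ∈ WR)
    (hsep : x - w ∈ WR ∨ z - y ∈ WR) :
    F z w ⊆ Set.centralizer ((fun B => Z * B * ContinuousLinearMap.adjoint Z) '' (F x y)) := by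

  classical
  have hstar : ∀ T : H →L[ℂ] H, ContinuousLinearMap.adjoint T = star T := fun T =>
    (ContinuousLinearMap.star_eq_adjoint T).symm
  have hΓstar : star Γ = Γ := by rw [← hstar]; exact hΓsa
  -- star of Z
  have hZstar : star Z = ((1 + Complex.I) / 2) • (1 : H →L[ℂ] H)
      + ((1 - Complex.I) / 2) • Γ := by
    rw [hZ, star_add, star_smul, star_smul, star_one, hΓstar]
    congr 1
    · congr 1
      simp [Complex.star_def, Complex.ext_iff]
    · congr 1
      simp [Complex.star_def, Complex.ext_iff]
  -- Z is unitary
  have hZsZ : star Z * Z = 1 := by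
    rw [hZstar, hZ]
    simp only [add_mul, mul_add, smul_mul_smul_comm, one_mul, mul_one, hΓ2]
    rw [show (1 : H →L[ℂ] H) = (1 : ℂ) • (1 : H →L[ℂ] H) by simp]
    match_scalars
    all_goals norm_num [Complex.ext_iff]
  -- Z squared is Γ
  have hZZ : Z * Z = Γ := by
    rw [hZ]
    simp only [add_mul, mul_add, smul_mul_smul_comm, one_mul, mul_one, hΓ2]
    rw [show Γ = (0 : ℂ) • (1 : H →L[ℂ] H) + (1 : ℂ) • Γ by simp]
    match_scalars
    all_goals norm_num [Complex.ext_iff]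
  have hZsZs : star Z * star Z = Γ := by
    rw [hZstar]
    simp only [add_mul, mul_add, smul_mul_smul_comm, one_mul, mul_one, hΓ2]
    rw [show Γ = (0 : ℂ) • (1 : H →L[ℂ] H) + (1 : ℂ) • Γ by simp]
    match_scalars
    all_goals norm_num [Complex.ext_iff]
  -- star of U commutes with Γ
  have hUsΓ : ∀ a : ℝ × ℝ, star (U a) * Γ = Γ * star (U a) := by
    intro a
    have h := congrArg star (hUΓ a)
    rw [star_mul, star_mul, hΓstar] at h
    exact h.symm
  -- translation covariance of Mx
  have hsub : ∀ a b : ℝ × ℝ, b - a ∈ WR → Mx b ⊆ Mx a := by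
    intro a b hba C hC
    rw [hMx] at hC ⊢
    obtain ⟨D, hD, rfl⟩ := hC
    refine ⟨U (b - a) * D * ContinuousLinearMap.adjoint (U (b - a)), ?_, ?_⟩
    · apply hMwedge (b - a) hba
      rw [hMx]
      exact ⟨D, hD, rfl⟩
    · have h1 : U b = U a * U (b - a) := by
        rw [← hUadd]; congr 1; abel
      simp only [hstar, h1, star_mul, mul_assoc]
  -- Γ-invariance of Mx
  have hΓMx : ∀ (a : ℝ × ℝ) (C : H →L[ℂ] H), C ∈ Mx a → Γ * C * Γ ∈ Mx a := by
    intro a C hC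
    rw [hMx] at hC ⊢
    obtain ⟨D, hD, rfl⟩ := hC
    refine ⟨Γ * D * Γ, hMΓ D hD, ?_⟩
    simp only [hstar]
    calc U a * (Γ * D * Γ) * star (U a)
        = (U a * Γ) * D * (Γ * star (U a)) := by simp only [mul_assoc]
      _ = (Γ * U a) * D * (star (U a) * Γ) := by rw [hUΓ a, hUsΓ a]
      _ = Γ * (U a * D * star (U a)) * Γ := by simp only [mul_assoc]
  -- conjugation by Z is multiplicative
  have hZmul : ∀ P Q : H →L[ℂ] H,
      (Z * P * star Z) * (Z * Q * star Z) = Z * (P * Q) * star Z := by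
    intro P Q
    calc (Z * P * star Z) * (Z * Q * star Z)
        = Z * (P * ((star Z * Z) * (Q * star Z))) := by simp only [mul_assoc]
      _ = Z * (P * Q) * star Z := by rw [hZsZ, one_mul]; simp only [mul_assoc]
  -- main proof
  intro A hA
  rw [hF] at hA
  obtain ⟨hA1, hA2⟩ := hA
  rintro B' ⟨B, hB, rfl⟩
  rw [hF] at hB
  obtain ⟨hB1, hB2⟩ := hB
  simp only [hstar] at hA1 hB1 ⊢
  rcases hsep with hxw | hzy
  · -- x - w ∈ W_R : use that B is twisted, Z B Z* = Γ C Γ with C ∈ Mx x ⊆ Mx w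
    obtain ⟨C, hC, rfl⟩ := hB1
    have hmem : Γ * C * Γ ∈ Mx w := hsub w x hxw (hΓMx x C hC)
    have hkey : Z * (Z * C * star Z) * star Z = Γ * C * Γ := by
      calc Z * (Z * C * star Z) * star Z
          = (Z * Z) * C * (star Z * star Z) := by simp only [mul_assoc]
        _ = Γ * C * Γ := by rw [hZZ, hZsZs]
    rw [hkey]
    exact hA2 (Γ * C * Γ) hmem
  · -- z - y ∈ W_R : A = Z C Z* with C ∈ Mx z ⊆ Mx y, and B commutes with Mx y
    obtain ⟨C, hC, rfl⟩ := hA1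
    have hCy : C ∈ Mx y := hsub y z hzy hC
    have hcomm : C * B = B * C := hB2 C hCy
    rw [hZmul, hZmul, hcomm]
end

section
/- If V is a left disorder operator, then V F V* ⊆ F, where F = (P^t)' ∩ Q' is the local field algebra; that is, conjugation by a left disorder operator preserves the local field algebra. -/
variable {H : Type*} [NormedAddCommGroup H] [InnerProductSpace ℂ H] [CompleteSpace H]

/-- A left disorder operator (for the pair `P`, `Q`): a unitary `V` commuting with `Γ`
that implements `Γ ⬝ Γ` on `P` and the identity on `Q`. -/
def IsLeftDisorder (Γ : H →L[ℂ] H) (P Q : VonNeumannAlgebra H) (V : H →L[ℂ] H) : Prop :=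
  (ContinuousLinearMap.adjoint V * V = 1 ∧ V * ContinuousLinearMap.adjoint V = 1) ∧
  V * Γ = Γ * V ∧
  (∀ A ∈ P, V * A * ContinuousLinearMap.adjoint V = Γ * A * Γ) ∧
  (∀ A ∈ Q, V * A * ContinuousLinearMap.adjoint V = A)

/-- A right disorder operator (for the pair `P`, `Q`): a unitary `V` commuting with `Γ`
that implements the identity on `P` and `Γ ⬝ Γ` on `Q`. -/
def IsRightDisorder (Γ : H →L[ℂ] H) (P Q : VonNeumannAlgebra H) (V : H →L[ℂ] H) : Prop :=
  (ContinuousLinearMap.adjoint V * V = 1 ∧ V * ContinuousLinearMap.adjoint V = 1) ∧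
  V * Γ = Γ * V ∧
  (∀ A ∈ P, V * A * ContinuousLinearMap.adjoint V = A) ∧
  (∀ A ∈ Q, V * A * ContinuousLinearMap.adjoint V = Γ * A * Γ)

/-- Auxiliary: if `X` commutes with `A`, then their conjugates by `V` (with one-sided inverse
`W`) commute. -/
theorem conj_comm_aux {M : Type*} [Monoid M] {V W A X : M} (h1 : W * V = 1)
    (h : X * A = A * X) : (V * X * W) * (V * A * W) = (V * A * W) * (V * X * W) := by
  have key : ∀ Y T : M, (V * Y * W) * (V * T * W) = V * (Y * T) * W := by
    intro Y T
    calc (V * Y * W) * (V * T * W) = V * (Y * ((W * V) * (T * W))) := by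
          simp only [mul_assoc]
      _ = V * (Y * T) * W := by simp only [h1, one_mul, mul_assoc]
  rw [key, key, h]

/-- If `V` is a left disorder operator, then `V F V* ⊆ F`, where
`F = (P^t)' ∩ Q'` is the local field algebra: conjugation by a left disorder operator preserves
the local field algebra. -/
theorem leftDisorder_conj_mem_localFieldAlgebra
    (Γ : H →L[ℂ] H) (hΓsa : ContinuousLinearMap.adjoint Γ = Γ) (hΓ2 : Γ * Γ = 1)
    (Z : H →L[ℂ] H)
    (hZ : Z = ((1 - Complex.I) / 2) • (1 : H →L[ℂ] H) + ((1 + Complex.I) / 2) • Γ)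
    (P Q : VonNeumannAlgebra H)
    (hPΓ : ∀ A ∈ P, Γ * A * Γ ∈ P) (hQΓ : ∀ A ∈ Q, Γ * A * Γ ∈ Q)
    (hPQ : (P : Set (H →L[ℂ] H)) ⊆ Set.centralizer (Q : Set (H →L[ℂ] H)))
    -- the local field algebra F = (P^t)' ∩ Q'
    (F : Set (H →L[ℂ] H))
    (hF : F = Set.centralizer
        ((fun B => Z * B * ContinuousLinearMap.adjoint Z) '' (P : Set (H →L[ℂ] H)))
      ∩ Set.centralizer (Q : Set (H →L[ℂ] H)))
    (V : H →L[ℂ] H) (hV : IsLeftDisorder Γ P Q V) :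
    ∀ A ∈ F, V * A * ContinuousLinearMap.adjoint V ∈ F := by
  obtain ⟨⟨hu1, hu2⟩, hVΓ, hVP, hVQ⟩ := hV
  set V' := ContinuousLinearMap.adjoint V with hV'
  -- V commutes with Z
  have hVZ : V * Z = Z * V := by
    rw [hZ]
    simp [mul_add, add_mul, mul_smul_comm, smul_mul_assoc, hVΓ]
  -- V commutes with adjoint Z
  have hZstar : ContinuousLinearMap.adjoint Z
      = ((1 + Complex.I) / 2) • (1 : H →L[ℂ] H) + ((1 - Complex.I) / 2) • Γ := by
    rw [← ContinuousLinearMap.star_eq_adjoint, hZ]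
    simp [star_add, star_smul, ContinuousLinearMap.star_eq_adjoint, hΓsa, map_div₀,
      Complex.ext_iff, sub_eq_add_neg]
  have hVZ' : V * ContinuousLinearMap.adjoint Z = ContinuousLinearMap.adjoint Z * V := by
    rw [hZstar]
    simp [mul_add, add_mul, mul_smul_comm, smul_mul_assoc, hVΓ]
  -- key: for B ∈ P, V * (Z (ΓBΓ) Z*) * V' = Z B Z*
  have hV'Z' : ContinuousLinearMap.adjoint Z * V' = V' * ContinuousLinearMap.adjoint Z := by
    have h := congrArg star hVZ
    rw [star_mul, star_mul] at h
    simp only [ContinuousLinearMap.star_eq_adjoint] at h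
    exact h
  have hkey : ∀ B ∈ P, V * (Z * (Γ * B * Γ) * ContinuousLinearMap.adjoint Z) * V'
      = Z * B * ContinuousLinearMap.adjoint Z := by
    intro B hB
    have h1 : V * (Γ * B * Γ) * V' = B := by
      rw [hVP (Γ * B * Γ) (hPΓ B hB)]
      calc Γ * (Γ * B * Γ) * Γ = (Γ * Γ) * B * (Γ * Γ) := by simp only [mul_assoc]
        _ = B := by rw [hΓ2]; simp
    calc V * (Z * (Γ * B * Γ) * ContinuousLinearMap.adjoint Z) * V'
        = Z * (V * (Γ * B * Γ) * V') * ContinuousLinearMap.adjoint Z := by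
          simp only [← mul_assoc, hVZ]
          simp only [mul_assoc, hV'Z']
      _ = Z * B * ContinuousLinearMap.adjoint Z := by rw [h1]
  intro A hA
  rw [hF] at hA ⊢
  obtain ⟨hA1, hA2⟩ := hA
  constructor
  · rintro X ⟨B, hB, rfl⟩
    have hcomm : Z * (Γ * B * Γ) * ContinuousLinearMap.adjoint Z * A
        = A * (Z * (Γ * B * Γ) * ContinuousLinearMap.adjoint Z) :=
      hA1 _ ⟨Γ * B * Γ, hPΓ B hB, rfl⟩
    have := conj_comm_aux (V := V) (W := V') (A := A)
      (X := Z * (Γ * B * Γ) * ContinuousLinearMap.adjoint Z) hu1 hcomm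
    rwa [hkey B hB] at this
  · intro X hX
    have hXc : V * X * V' = X := hVQ X hX
    have := conj_comm_aux (V := V) (W := V') (A := A) (X := X) hu1 (hA2 X hX)
    rwa [hXc] at this
end

section
/- If V and V̂ are both left disorder operators, then there exists an even unitary operator A ∈ F (i.e. A ∈ (P^t)' ∩ Q' with ΓAΓ = A) such that V = A V̂. In other words, a left disorder operator is unique up to multiplication by an even unitary element of the local field algebra F. -/
variable {H : Type*} [NormedAddCommGroup H] [InnerProductSpace ℂ H] [CompleteSpace H]

/-- If `V` and `V̂` are both left disorder operators, then there exists an even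
unitary `A ∈ F = (P^t)' ∩ Q'` such that `V = A V̂`: a left disorder operator is unique up to
multiplication by an even unitary element of the local field algebra. -/
theorem leftDisorder_unique_up_to_even_unitary
    (Γ : H →L[ℂ] H) (hΓsa : ContinuousLinearMap.adjoint Γ = Γ) (hΓ2 : Γ * Γ = 1)
    (Z : H →L[ℂ] H)
    (hZ : Z = ((1 - Complex.I) / 2) • (1 : H →L[ℂ] H) + ((1 + Complex.I) / 2) • Γ)
    (P Q : VonNeumannAlgebra H)
    (hPΓ : ∀ A ∈ P, Γ * A * Γ ∈ P) (hQΓ : ∀ A ∈ Q, Γ * A * Γ ∈ Q)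
    (hPQ : (P : Set (H →L[ℂ] H)) ⊆ Set.centralizer (Q : Set (H →L[ℂ] H)))
    -- the local field algebra F = (P^t)' ∩ Q'
    (F : Set (H →L[ℂ] H))
    (hF : F = Set.centralizer
        ((fun B => Z * B * ContinuousLinearMap.adjoint Z) '' (P : Set (H →L[ℂ] H)))
      ∩ Set.centralizer (Q : Set (H →L[ℂ] H)))
    (V V' : H →L[ℂ] H) (hV : IsLeftDisorder Γ P Q V) (hV' : IsLeftDisorder Γ P Q V') :
    ∃ A ∈ F,
      (ContinuousLinearMap.adjoint A * A = 1 ∧ A * ContinuousLinearMap.adjoint A = 1) ∧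
      Γ * A * Γ = A ∧
      V = A * V' := by

  obtain ⟨⟨hV1, hV2⟩, hVΓ, hVP, hVQ⟩ := hV
  obtain ⟨⟨hV'1, hV'2⟩, hV'Γ, hV'P, hV'Q⟩ := hV'
  set W := ContinuousLinearMap.adjoint V' with hW
  -- adjoint of A := V * W is V' * adjoint V
  have hadj : ContinuousLinearMap.adjoint (V * W) =
      V' * ContinuousLinearMap.adjoint V := by
    simp only [← ContinuousLinearMap.star_eq_adjoint, hW, star_mul, star_star]
  -- Γ commutes with W
  have hWΓ : W * Γ = Γ * W := by
    have := congrArg ContinuousLinearMap.adjoint hV'Γ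
    simp only [← ContinuousLinearMap.star_eq_adjoint, star_mul] at this
    simp only [ContinuousLinearMap.star_eq_adjoint, hΓsa, ← hW] at this
    exact this.symm
  have hAΓ : (V * W) * Γ = Γ * (V * W) := by
    calc (V * W) * Γ = V * (W * Γ) := by rw [mul_assoc]
    _ = V * Γ * W := by rw [hWΓ, mul_assoc]
    _ = Γ * (V * W) := by rw [hVΓ, mul_assoc]
  -- A commutes with every element of Q
  have hAQ : ∀ B ∈ Q, (V * W) * B = B * (V * W) := by
    intro B hB
    have h1 : V * B = B * V := by
      have := congrArg (· * V) (hVQ B hB)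
      simpa [mul_assoc, hV1] using this
    have h2 : V' * B = B * V' := by
      have := congrArg (· * V') (hV'Q B hB)
      simpa [mul_assoc, hV'1] using this
    have h3 : W * B = B * W := by
      have := congrArg (fun x => W * x * W) h2
      simp only [← mul_assoc] at this
      rw [show W * V' = 1 from hV'1] at this
      simp only [one_mul, mul_assoc] at this
      rw [show V' * W = 1 from hV'2] at this
      simpa using this.symm
    calc (V * W) * B = V * (B * W) := by rw [mul_assoc, h3]
    _ = (V * B) * W := by rw [mul_assoc]
    _ = B * (V * W) := by rw [h1, mul_assoc]
  -- A commutes with every element of P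
  have hAP : ∀ p ∈ P, (V * W) * p = p * (V * W) := by
    intro p hp
    have hq : Γ * p * Γ ∈ P := hPΓ p hp
    have h1 : V * p = Γ * p * Γ * V := by
      have := congrArg (· * V) (hVP p hp)
      simpa [mul_assoc, hV1] using this
    have h2 : V' * (Γ * p * Γ) = p * V' := by
      have h := hV'P _ hq
      have h' : Γ * (Γ * p * Γ) * Γ = p := by
        calc Γ * (Γ * p * Γ) * Γ = (Γ * Γ) * p * (Γ * Γ) := by noncomm_ring
        _ = p := by rw [hΓ2]; simp
      have := congrArg (· * V') (h.trans h')
      simpa [mul_assoc, hV'1] using this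
    have h3 : W * p = Γ * p * Γ * W := by
      have := congrArg (fun x => W * x * W) h2
      simp only [← mul_assoc] at this
      rw [show W * V' = 1 from hV'1] at this
      simp only [one_mul, mul_assoc] at this
      rw [show V' * W = 1 from hV'2] at this
      simp only [mul_one] at this
      simpa [mul_assoc] using this.symm
    have h4 : V * (Γ * p * Γ) = p * V := by
      calc V * (Γ * p * Γ) = (V * Γ) * p * Γ := by noncomm_ring
      _ = Γ * (V * p) * Γ := by rw [hVΓ]; noncomm_ring
      _ = Γ * (Γ * p * Γ * V) * Γ := by rw [h1]
      _ = (Γ * Γ) * p * (Γ * (V * Γ)) := by noncomm_ring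
      _ = (Γ * Γ) * p * (Γ * (Γ * V)) := by rw [hVΓ]
      _ = (Γ * Γ) * p * ((Γ * Γ) * V) := by noncomm_ring
      _ = p * V := by rw [hΓ2]; simp
    calc (V * W) * p = V * (W * p) := by rw [mul_assoc]
    _ = V * (Γ * p * Γ) * W := by rw [h3]; noncomm_ring
    _ = p * (V * W) := by rw [h4, mul_assoc]
  -- A commutes with Z and adjoint Z
  have hAZ : (V * W) * Z = Z * (V * W) := by
    rw [hZ]
    simp only [mul_add, add_mul, mul_smul_comm, smul_mul_assoc, mul_one, one_mul, hAΓ]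
  have hZadj : ContinuousLinearMap.adjoint Z =
      ((1 + Complex.I) / 2) • (1 : H →L[ℂ] H) + ((1 - Complex.I) / 2) • Γ := by
    rw [hZ]
    simp only [← ContinuousLinearMap.star_eq_adjoint, star_add, star_smul, star_one]
    rw [ContinuousLinearMap.star_eq_adjoint, hΓsa]
    congr 1 <;> congr 1 <;> simp [Complex.ext_iff]
  have hAZ' : (V * W) * ContinuousLinearMap.adjoint Z
      = ContinuousLinearMap.adjoint Z * (V * W) := by
    rw [hZadj]
    simp only [mul_add, add_mul, mul_smul_comm, smul_mul_assoc, mul_one, one_mul, hAΓ]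
  refine ⟨V * W, ?_, ⟨?_, ?_⟩, ?_, ?_⟩
  · rw [hF]
    constructor
    · rintro m ⟨p, hp, rfl⟩
      calc Z * p * ContinuousLinearMap.adjoint Z * (V * W)
          = Z * p * ((V * W) * ContinuousLinearMap.adjoint Z) := by rw [hAZ']; noncomm_ring
        _ = Z * (p * (V * W)) * ContinuousLinearMap.adjoint Z := by noncomm_ring
        _ = Z * ((V * W) * p) * ContinuousLinearMap.adjoint Z := by rw [hAP p hp]
        _ = (Z * (V * W)) * p * ContinuousLinearMap.adjoint Z := by noncomm_ring
        _ = (V * W) * (Z * p * ContinuousLinearMap.adjoint Z) := by rw [← hAZ]; noncomm_ring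
    · intro m hm
      exact (hAQ m hm).symm
  · rw [hadj]
    calc V' * ContinuousLinearMap.adjoint V * (V * W)
        = V' * (ContinuousLinearMap.adjoint V * V) * W := by noncomm_ring
      _ = 1 := by rw [hV1, mul_one, hV'2]
  · rw [hadj]
    calc V * W * (V' * ContinuousLinearMap.adjoint V)
        = V * (W * V') * ContinuousLinearMap.adjoint V := by noncomm_ring
      _ = 1 := by rw [hV'1, mul_one, hV2]
  · calc Γ * (V * W) * Γ = ((V * W) * Γ) * Γ := by rw [← hAΓ]
    _ = (V * W) * (Γ * Γ) := by noncomm_ring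
    _ = V * W := by rw [hΓ2, mul_one]
  · rw [mul_assoc, hV'1, mul_one]
end

section
/- Suppose V_L is a left disorder operator and set V_R := ΓV_L. Then (P ∨ Q^t) ∩ {V_L}' ∩ {V_R}' = P₊ ∨ Q₊; that is, an element of the von Neumann algebra generated by P and Q^t commutes with both V_L and V_R if and only if it lies in the von Neumann algebra generated by the even parts P₊ and Q₊. -/
variable {H : Type*} [NormedAddCommGroup H] [InnerProductSpace ℂ H] [CompleteSpace H]

set_option maxHeartbeats 1000000 in
set_option synthInstance.maxHeartbeats 1000000 in
lemma vna_approx (S : Submodule ℂ (H →L[ℂ] H)) (h1 : (1 : H →L[ℂ] H) ∈ S)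
    (hmul : ∀ a ∈ S, ∀ b ∈ S, a * b ∈ S)
    (hstar : ∀ a ∈ S, star a ∈ S)
    (X : H →L[ℂ] H) (hX : ∀ c ∈ Set.centralizer (S : Set (H →L[ℂ] H)), c * X = X * c)
    (n : ℕ) (ζ : Fin n → H) (ε : ℝ) (hε : 0 < ε) :
    ∃ w ∈ S, ∀ i, ‖X (ζ i) - w (ζ i)‖ < ε := by
  classical
  haveI : CompleteSpace (PiLp 2 (fun _ : Fin n => H)) := by
    have h1 := PiLp.lipschitzWith_ofLp 2 (fun _ : Fin n => H)
    have h2 := PiLp.antilipschitzWith_ofLp 2 (fun _ : Fin n => H)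
    exact (completeSpace_congr (e := WithLp.equiv 2 (∀ _ : Fin n, H)) (h2.isUniformEmbedding h1.uniformContinuous)).mpr inferInstance
  let e := PiLp.continuousLinearEquiv 2 ℂ (fun _ : Fin n => H)
  set V := PiLp 2 (fun _ : Fin n => H) with hVdef
  let D : (H →L[ℂ] H) → (V →L[ℂ] V) := fun w =>
    (e.symm.toContinuousLinearMap.comp
      (ContinuousLinearMap.pi (fun i => w.comp (ContinuousLinearMap.proj i)))).comp
      e.toContinuousLinearMap
  have hD : ∀ w (x : V) i, D w x i = w (x i) := fun _ _ _ => rfl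
  let ev : (H →L[ℂ] H) →ₗ[ℂ] V :=
    { toFun := fun w => WithLp.toLp 2 (fun i => w (ζ i))
      map_add' := fun a b => PiLp.ext fun i => rfl
      map_smul' := fun c a => PiLp.ext fun i => rfl }
  set K0 : Submodule ℂ V := S.map ev with hK0def
  set K : Submodule ℂ V := K0.topologicalClosure with hKdef
  haveI : CompleteSpace K := K0.isClosed_topologicalClosure.completeSpace_coe
  have hKcl : (K : Set V) = closure (K0 : Set V) := Submodule.topologicalClosure_coe K0
  have hK0K : (K0 : Set V) ⊆ (K : Set V) := K0.le_topologicalClosure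
  have hDev : ∀ w a, D w (ev a) = ev (w * a) := fun w a => PiLp.ext fun i => rfl
  have hKinv : ∀ w ∈ S, ∀ x ∈ K, D w x ∈ K := by
    intro w hw x hx
    have hmt : Set.MapsTo (D w) (K0 : Set V) (K0 : Set V) := by
      rintro y ⟨a, ha, rfl⟩
      exact ⟨w * a, hmul w hw a ha, (hDev w a).symm⟩
    have hx' : x ∈ closure (K0 : Set V) := by
      rw [← hKcl]; exact hx
    have h2 := map_mem_closure (D w).continuous hx' hmt
    have h3 : D w x ∈ (K : Set V) := by rw [hKcl]; exact h2
    exact h3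
  set Pr : V →L[ℂ] V := K.subtypeL.comp K.orthogonalProjectionOnto with hPrdef
  have hPrapp : ∀ v, Pr v = (K.orthogonalProjectionOnto v : V) := fun v => rfl
  have hPrmem : ∀ v, Pr v ∈ K := fun v => (K.orthogonalProjectionOnto v).2
  have hPrfix : ∀ v ∈ K, Pr v = v := fun v hv => Submodule.starProjection_eq_self_iff.2 hv
  have hPrsub : ∀ (v : V), ∀ k ∈ K, inner ℂ (v - Pr v) k = 0 := fun v k hk =>
    Submodule.starProjection_inner_eq_zero v k hk
  have hDadj : ∀ w (x y : V), inner ℂ (D w x) y = inner ℂ x (D (star w) y) := by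
    intro w x y
    rw [PiLp.inner_apply, PiLp.inner_apply]
    refine Finset.sum_congr rfl fun i _ => ?_
    rw [hD, hD, ContinuousLinearMap.star_eq_adjoint]
    exact (ContinuousLinearMap.adjoint_inner_right w (x i) (y i)).symm
  have hPrD : ∀ w ∈ S, ∀ v, Pr (D w v) = D w (Pr v) := by
    intro w hw v
    have horth : D w (v - Pr v) ∈ Kᗮ := by
      rw [Submodule.mem_orthogonal]
      intro u hu
      rw [inner_eq_zero_symm, hDadj]
      exact hPrsub v _ (hKinv (star w) (hstar w hw) u hu)
    have h0 : Pr (D w (v - Pr v)) = 0 := by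
      rw [hPrapp, Submodule.orthogonalProjectionOnto_apply_of_mem_orthogonal horth]
      rfl
    have hsplit : D w v = D w (Pr v) + D w (v - Pr v) := by
      rw [← map_add]; congr 1; abel
    rw [hsplit, map_add, h0, add_zero, hPrfix _ (hKinv w hw _ (hPrmem v))]
  let inj : Fin n → (H →L[ℂ] V) := fun j =>
    e.symm.toContinuousLinearMap.comp
      (ContinuousLinearMap.pi (fun i => if i = j then ContinuousLinearMap.id ℂ H else 0))
  have hinj : ∀ j v i, inj j v i = if i = j then v else 0 := by
    intro j v i
    show (if i = j then ContinuousLinearMap.id ℂ H else 0) v = _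
    split <;> rfl
  let Pc : Fin n → Fin n → (H →L[ℂ] H) := fun i j =>
    ((ContinuousLinearMap.proj i).comp e.toContinuousLinearMap).comp (Pr.comp (inj j))
  have hPc : ∀ i j v, Pc i j v = (Pr (inj j v)) i := fun _ _ _ => rfl
  have hDinj : ∀ w j v, D w (inj j v) = inj j (w v) := by
    intro w j v
    refine PiLp.ext fun i => ?_
    rw [hD, hinj, hinj]
    split
    · rfl
    · exact map_zero w
  have hsum_apply : ∀ (u : Fin n → V) (i : Fin n), (∑ j, u j) i = ∑ j, (u j) i := by
    intro u i
    calc (∑ j, u j) i = (e.toContinuousLinearMap (∑ j, u j)) i := rfl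
      _ = (∑ j, e.toContinuousLinearMap (u j)) i := by rw [map_sum]
      _ = ∑ j, (e.toContinuousLinearMap (u j)) i := Finset.sum_apply i Finset.univ _
      _ = ∑ j, (u j) i := rfl
  have hdecomp : ∀ v : V, v = ∑ j, inj j (v j) := by
    intro v
    have h : ∀ i, (∑ j, inj j (v j)) i = v i := by
      intro i
      rw [hsum_apply]
      have h2 : ∀ j, (inj j (v j)) i = if i = j then v j else 0 := fun j => hinj j (v j) i
      rw [Finset.sum_congr rfl fun j _ => h2 j]
      rw [Finset.sum_ite_eq]
      simp
    exact PiLp.ext (fun i => (h i).symm)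
  have hPr_comp : ∀ (v : V) (i : Fin n), (Pr v) i = ∑ j, Pc i j (v j) := by
    intro v i
    conv_lhs => rw [hdecomp v]
    rw [map_sum, hsum_apply]
    exact Finset.sum_congr rfl fun j _ => (hPc i j (v j)).symm
  have hPcS : ∀ i j, Pc i j ∈ Set.centralizer (S : Set (H →L[ℂ] H)) := by
    intro i j
    rw [Set.mem_centralizer_iff]
    intro w hw
    ext v
    show w (Pc i j v) = Pc i j (w v)
    rw [hPc, hPc, ← hD w, ← hPrD w hw, hDinj]
  have hXPc : ∀ i j (v : H), X (Pc i j v) = Pc i j (X v) := by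
    intro i j v
    have hx := hX (Pc i j) (hPcS i j)
    calc X (Pc i j v) = (X * Pc i j) v := rfl
      _ = (Pc i j * X) v := by rw [hx]
      _ = Pc i j (X v) := rfl
  set ξ : V := ev 1 with hξdef
  have hξK : ξ ∈ K := hK0K ⟨1, h1, rfl⟩
  have hXv : Pr (D X ξ) = D X ξ := by
    have hcomp : ∀ i, (Pr (D X ξ)) i = (D X ξ) i := by
      intro i
      rw [hPr_comp, hD]
      calc ∑ j, Pc i j ((D X ξ) j)
          = ∑ j, X (Pc i j (ξ j)) := by
            refine Finset.sum_congr rfl fun j _ => ?_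
            rw [hD]; exact (hXPc i j (ξ j)).symm
        _ = X (∑ j, Pc i j (ξ j)) := (map_sum X _ _).symm
        _ = X ((Pr ξ) i) := by rw [hPr_comp]
        _ = X (ξ i) := by rw [hPrfix _ hξK]
    exact PiLp.ext hcomp
  have hmemcl : D X ξ ∈ closure (K0 : Set V) := by
    have hmem : D X ξ ∈ K := by rw [← hXv]; exact hPrmem _
    rw [← hKcl]; exact hmem
  rcases Metric.mem_closure_iff.1 hmemcl ε hε with ⟨y, hy, hdist⟩
  rcases hy with ⟨w, hw, rfl⟩
  refine ⟨w, hw, fun i => ?_⟩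
  have h1' : X (ζ i) - w (ζ i) = (D X ξ - ev w : V) i := rfl
  have h2' : ‖(D X ξ - ev w : V) i‖ ≤ ‖(D X ξ - ev w : V)‖ := by
    have hsq : ‖(D X ξ - ev w : V) i‖ ^ 2 ≤ ‖(D X ξ - ev w : V)‖ ^ 2 := by
      rw [PiLp.norm_sq_eq_of_L2]
      exact Finset.single_le_sum (f := fun j => ‖(D X ξ - ev w : V) j‖ ^ 2)
        (fun j _ => sq_nonneg _) (Finset.mem_univ i)
    calc ‖(D X ξ - ev w : V) i‖ = Real.sqrt (‖(D X ξ - ev w : V) i‖ ^ 2) :=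
          (Real.sqrt_sq (norm_nonneg _)).symm
      _ ≤ Real.sqrt (‖(D X ξ - ev w : V)‖ ^ 2) := Real.sqrt_le_sqrt hsq
      _ = ‖(D X ξ - ev w : V)‖ := Real.sqrt_sq (norm_nonneg _)
  have h3' : ‖(D X ξ - ev w : V)‖ < ε := by
    rw [← dist_eq_norm]; exact hdist
  rw [h1']
  exact lt_of_le_of_lt h2' h3'

set_option maxHeartbeats 4000000 in
set_option synthInstance.maxHeartbeats 1000000 in
/-- Suppose `V_L` is a left disorder operator and `V_R := ΓV_L`. Then
`(P ∨ Q^t) ∩ {V_L}' ∩ {V_R}' = P₊ ∨ Q₊`: an element of the von Neumann algebra generated by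
`P` and `Q^t` commutes with both `V_L` and `V_R` iff it lies in the von Neumann algebra
generated by the even parts `P₊` and `Q₊`. -/
theorem fixed_points_of_disorder_conjugation
    (Γ : H →L[ℂ] H) (hΓsa : ContinuousLinearMap.adjoint Γ = Γ) (hΓ2 : Γ * Γ = 1)
    (Z : H →L[ℂ] H)
    (hZ : Z = ((1 - Complex.I) / 2) • (1 : H →L[ℂ] H) + ((1 + Complex.I) / 2) • Γ)
    (P Q : VonNeumannAlgebra H)
    (hPΓ : ∀ A ∈ P, Γ * A * Γ ∈ P) (hQΓ : ∀ A ∈ Q, Γ * A * Γ ∈ Q)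
    (hPQ : (P : Set (H →L[ℂ] H)) ⊆ Set.centralizer (Q : Set (H →L[ℂ] H)))
    (VL VR : H →L[ℂ] H) (hVL : IsLeftDisorder Γ P Q VL) (hVR : VR = Γ * VL)
    -- the twisted algebra Q^t and the even parts P₊, Q₊ (as sets)
    (Qt Pplus Qplus : Set (H →L[ℂ] H))
    (hQt : Qt = (fun B => Z * B * ContinuousLinearMap.adjoint Z) '' (Q : Set (H →L[ℂ] H)))
    (hPplus : Pplus = {A : H →L[ℂ] H | A ∈ P ∧ Γ * A * Γ = A})
    (hQplus : Qplus = {A : H →L[ℂ] H | A ∈ Q ∧ Γ * A * Γ = A}) :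
    Set.centralizer (Set.centralizer ((P : Set (H →L[ℂ] H)) ∪ Qt))
        ∩ Set.centralizer {VL} ∩ Set.centralizer {VR}
      = Set.centralizer (Set.centralizer (Pplus ∪ Qplus)) := by
  classical
  obtain ⟨⟨hV1, hV2⟩, hVΓ, hVP, hVQ⟩ := hVL
  rw [← ContinuousLinearMap.star_eq_adjoint] at hV1 hV2 hΓsa
  have hVP' : ∀ A ∈ P, VL * A * star VL = Γ * A * Γ := by
    intro A hA; rw [ContinuousLinearMap.star_eq_adjoint]; exact hVP A hA
  have hVQ' : ∀ B ∈ Q, VL * B * star VL = B := by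
    intro B hB; rw [ContinuousLinearMap.star_eq_adjoint]; exact hVQ B hB
  -- basic Γ facts
  have hΓl : ∀ C : H →L[ℂ] H, Γ * (Γ * C) = C := fun C => by rw [← mul_assoc, hΓ2, one_mul]
  have hev1 : ∀ C : H →L[ℂ] H, Γ * C * Γ = C → Γ * C = C * Γ := by
    intro C h
    have h2 := congrArg (fun t => t * Γ) h
    simpa only [mul_assoc, hΓ2, mul_one] using h2
  have hodd1 : ∀ C : H →L[ℂ] H, Γ * C * Γ = -C → Γ * C = -(C * Γ) := by
    intro C h
    have h2 := congrArg (fun t => t * Γ) h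
    simpa only [mul_assoc, hΓ2, mul_one, neg_mul] using h2
  -- star of Z
  have hconj1 : (starRingEnd ℂ) ((1 - Complex.I) / 2) = (1 + Complex.I) / 2 := by
    rw [map_div₀, map_sub, map_one, Complex.conj_I, map_ofNat, sub_neg_eq_add]
  have hconj2 : (starRingEnd ℂ) ((1 + Complex.I) / 2) = (1 - Complex.I) / 2 := by
    rw [map_div₀, map_add, map_one, Complex.conj_I, map_ofNat, ← sub_eq_add_neg]
  have hZs : star Z = ((1 + Complex.I) / 2) • (1 : H →L[ℂ] H) + ((1 - Complex.I) / 2) • Γ := by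
    rw [hZ]
    simp only [star_add, star_smul, star_one, Complex.star_def, hΓsa, hconj1, hconj2]
  -- Z unitary
  have hZZs : Z * star Z = 1 := by
    rw [hZs, hZ]
    simp only [add_mul, mul_add, smul_mul_assoc, mul_smul_comm, one_mul, mul_one, smul_smul, hΓ2]
    match_scalars
    · linear_combination (-(1:ℂ)/2) * Complex.I_sq
    · linear_combination ((1:ℂ)/2) * Complex.I_sq
  have hZsZ : star Z * Z = 1 := by
    rw [hZs, hZ]
    simp only [add_mul, mul_add, smul_mul_assoc, mul_smul_comm, one_mul, mul_one, smul_smul, hΓ2]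
    match_scalars
    · linear_combination (-(1:ℂ)/2) * Complex.I_sq
    · linear_combination ((1:ℂ)/2) * Complex.I_sq
  -- commuting with Z
  have hZc : ∀ C : H →L[ℂ] H, Γ * C = C * Γ → Z * C = C * Z := by
    intro C h
    rw [hZ]
    simp only [add_mul, mul_add, smul_mul_assoc, mul_smul_comm, one_mul, mul_one]
    rw [h]
  have hsZc : ∀ C : H →L[ℂ] H, Γ * C = C * Γ → star Z * C = C * star Z := by
    intro C h
    rw [hZs]
    simp only [add_mul, mul_add, smul_mul_assoc, mul_smul_comm, one_mul, mul_one]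
    rw [h]
  have heven : ∀ C : H →L[ℂ] H, Γ * C = C * Γ → Z * C * star Z = C := by
    intro C h
    rw [hZc C h, mul_assoc, hZZs, mul_one]
  have hoddZ : ∀ C : H →L[ℂ] H, Γ * C = -(C * Γ) → Z * C * star Z = (-Complex.I) • (C * Γ) := by
    intro C h
    have e1 : Z * C = ((1 - Complex.I) / 2) • C - ((1 + Complex.I) / 2) • (C * Γ) := by
      rw [hZ]
      simp only [add_mul, smul_mul_assoc, one_mul]
      rw [h, smul_neg, ← sub_eq_add_neg]
    rw [e1, hZs]
    simp only [sub_mul, mul_add, smul_mul_assoc, mul_smul_comm, smul_smul, mul_one, one_mul,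
      mul_assoc, hΓ2]
    match_scalars
    · ring
    · ring
  -- generic manipulation helpers
  have hcomm_of_conj : ∀ u A : H →L[ℂ] H, star u * u = 1 → u * A * star u = A → u * A = A * u := by
    intro u A hu h
    have h2 := congrArg (fun t => t * u) h
    simpa only [mul_assoc, hu, mul_one] using h2
  have hswap : ∀ u A : H →L[ℂ] H, star u * u = 1 → u * star u = 1 →
      u * A = A * u → star u * A = A * star u := by
    intro u A h1 h2 h
    calc star u * A = star u * A * (u * star u) := by rw [h2, mul_one]
      _ = star u * (A * u) * star u := by simp only [mul_assoc]
      _ = star u * (u * A) * star u := by rw [h]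
      _ = (star u * u) * (A * star u) := by simp only [mul_assoc]
      _ = A * star u := by rw [h1, one_mul]
  have hcc : ∀ u p q : H →L[ℂ] H, u * p = p * u → u * q = q * u → u * (p * q) = (p * q) * u := by
    intro u p q h1 h2
    rw [← mul_assoc, h1, mul_assoc, h2, ← mul_assoc]
  have hsplit : ∀ u A B : H →L[ℂ] H, star u * u = 1 →
      u * (A * B) * star u = (u * A * star u) * (u * B * star u) := by
    intro u A B hu
    calc u * (A * B) * star u = u * (A * ((star u * u) * (B * star u))) := by
          rw [hu, one_mul]; simp only [mul_assoc]
      _ = (u * A * star u) * (u * B * star u) := by simp only [mul_assoc]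
  -- VL commutation facts
  have hVZ : VL * Z = Z * VL := by
    rw [hZ]
    simp only [mul_add, add_mul, mul_smul_comm, smul_mul_assoc, mul_one, one_mul]
    rw [hVΓ]
  have hVsZ : VL * star Z = star Z * VL := by
    rw [hZs]
    simp only [mul_add, add_mul, mul_smul_comm, smul_mul_assoc, mul_one, one_mul]
    rw [hVΓ]
  have hVB : ∀ B ∈ Q, VL * B = B * VL := fun B hB =>
    hcomm_of_conj VL B hV1 (hVQ' B hB)
  have hVM : ∀ B ∈ Q, VL * (Z * B * star Z) = (Z * B * star Z) * VL := by
    intro B hB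
    exact hcc VL (Z * B) (star Z) (hcc VL Z B hVZ (hVB B hB)) hVsZ
  -- star VR etc.
  have hsVR : star VR = star VL * Γ := by rw [hVR, star_mul, hΓsa]
  have hVR1 : star VR * VR = 1 := by
    rw [hsVR, hVR]
    calc star VL * Γ * (Γ * VL) = star VL * (Γ * (Γ * VL)) := by simp only [mul_assoc]
      _ = star VL * VL := by rw [hΓl]
      _ = 1 := hV1
  have hVR2 : VR * star VR = 1 := by
    rw [hsVR, hVR]
    calc Γ * VL * (star VL * Γ) = Γ * (VL * star VL) * Γ := by simp only [mul_assoc]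
      _ = Γ * Γ := by rw [hV2, mul_one]
      _ = 1 := hΓ2
  set u4 : H →L[ℂ] H := VL * VR with hu4
  have hsu4 : star u4 = star VR * star VL := by rw [hu4, star_mul]
  have hu41 : star u4 * u4 = 1 := by
    rw [hsu4, hu4]
    calc star VR * star VL * (VL * VR) = star VR * (star VL * VL) * VR := by simp only [mul_assoc]
      _ = star VR * VR := by rw [hV1, mul_one]
      _ = 1 := hVR1
  have hu42 : u4 * star u4 = 1 := by
    rw [hsu4, hu4]
    calc VL * VR * (star VR * star VL) = VL * (VR * star VR) * star VL := by simp only [mul_assoc]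
      _ = VL * star VL := by rw [hVR2, mul_one]
      _ = 1 := hV2
  -- conjugation by VL, VR, u4
  have cVL_M : ∀ B ∈ Q, VL * (Z * B * star Z) * star VL = Z * B * star Z := by
    intro B hB
    rw [hVM B hB, mul_assoc, hV2, mul_one]
  have cVR_P : ∀ A ∈ P, VR * A * star VR = A := by
    intro A hA
    rw [hsVR, hVR]
    calc Γ * VL * A * (star VL * Γ) = Γ * (VL * A * star VL) * Γ := by simp only [mul_assoc]
      _ = Γ * (Γ * A * Γ) * Γ := by rw [hVP' A hA]
      _ = A := by
          calc Γ * (Γ * A * Γ) * Γ = Γ * (Γ * (A * (Γ * Γ))) := by simp only [mul_assoc]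
            _ = Γ * (Γ * A) := by rw [hΓ2, mul_one]
            _ = A := hΓl A
  have hΓM : ∀ B : H →L[ℂ] H, Γ * (Z * B * star Z) * Γ = Z * (Γ * B * Γ) * star Z := by
    intro B
    have hΓZ : Γ * Z = Z * Γ := (hZc Γ rfl).symm
    have hΓsZ : Γ * star Z = star Z * Γ := (hsZc Γ rfl).symm
    calc Γ * (Z * B * star Z) * Γ = (Γ * Z) * (B * (star Z * Γ)) := by simp only [mul_assoc]
      _ = (Z * Γ) * (B * (Γ * star Z)) := by rw [hΓZ, ← hΓsZ]
      _ = Z * (Γ * B * Γ) * star Z := by simp only [mul_assoc]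
  have cVR_M : ∀ B ∈ Q, VR * (Z * B * star Z) * star VR = Z * (Γ * B * Γ) * star Z := by
    intro B hB
    rw [hsVR, hVR]
    calc Γ * VL * (Z * B * star Z) * (star VL * Γ)
        = Γ * (VL * (Z * B * star Z) * star VL) * Γ := by simp only [mul_assoc]
      _ = Γ * (Z * B * star Z) * Γ := by rw [cVL_M B hB]
      _ = Z * (Γ * B * Γ) * star Z := hΓM B
  have cu4_P : ∀ A ∈ P, u4 * A * star u4 = Γ * A * Γ := by
    intro A hA
    rw [hsu4, hu4]
    calc VL * VR * A * (star VR * star VL)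
        = VL * (VR * A * star VR) * star VL := by simp only [mul_assoc]
      _ = VL * A * star VL := by rw [cVR_P A hA]
      _ = Γ * A * Γ := hVP' A hA
  have cu4_M : ∀ B ∈ Q, u4 * (Z * B * star Z) * star u4 = Z * (Γ * B * Γ) * star Z := by
    intro B hB
    rw [hsu4, hu4]
    calc VL * VR * (Z * B * star Z) * (star VR * star VL)
        = VL * (VR * (Z * B * star Z) * star VR) * star VL := by simp only [mul_assoc]
      _ = VL * (Z * (Γ * B * Γ) * star Z) * star VL := by rw [cVR_M B hB]
      _ = Z * (Γ * B * Γ) * star Z := cVL_M (Γ * B * Γ) (hQΓ B hB)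
  -- parity of even/odd components (unscaled)
  have hplus0 : ∀ C : H →L[ℂ] H, Γ * (C + Γ * C * Γ) * Γ = C + Γ * C * Γ := by
    intro C
    calc Γ * (C + Γ * C * Γ) * Γ = Γ * C * Γ + Γ * (Γ * (C * (Γ * Γ))) := by
          simp only [mul_add, add_mul, mul_assoc]
      _ = Γ * C * Γ + C := by rw [hΓ2, mul_one, hΓl]
      _ = C + Γ * C * Γ := add_comm _ _
  have hminus0 : ∀ C : H →L[ℂ] H, Γ * (C - Γ * C * Γ) * Γ = -(C - Γ * C * Γ) := by
    intro C
    calc Γ * (C - Γ * C * Γ) * Γ = Γ * C * Γ - Γ * (Γ * (C * (Γ * Γ))) := by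
          simp only [mul_sub, sub_mul, mul_assoc]
      _ = Γ * C * Γ - C := by rw [hΓ2, mul_one, hΓl]
      _ = -(C - Γ * C * Γ) := by abel
  have hsum_split : ∀ C : H →L[ℂ] H,
      C = (2⁻¹ : ℂ) • (C + Γ * C * Γ) + (2⁻¹ : ℂ) • (C - Γ * C * Γ) := by
    intro C; module
  -- the generating set and its span
  set G : Set (H →L[ℂ] H) := {x | ∃ A ∈ P, ∃ B ∈ Q, x = A * (Z * B * star Z)} with hGdef
  set W : Submodule ℂ (H →L[ℂ] H) := Submodule.span ℂ G with hWdef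
  have hGmem : ∀ A ∈ P, ∀ B ∈ Q, A * (Z * B * star Z) ∈ W := fun A hA B hB =>
    Submodule.subset_span ⟨A, hA, B, hB, rfl⟩
  have hPW : ∀ A ∈ P, A ∈ W := by
    intro A hA
    have h : A * (Z * (1 : H →L[ℂ] H) * star Z) = A := by rw [mul_one, hZZs, mul_one]
    have := hGmem A hA 1 (one_mem Q)
    rwa [h] at this
  have hQtW : ∀ B ∈ Q, Z * B * star Z ∈ W := by
    intro B hB
    have := hGmem 1 (one_mem P) B hB
    rwa [one_mul] at this
  have hW1 : (1 : H →L[ℂ] H) ∈ W := hPW 1 (one_mem P)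
  -- the exchange lemma
  have hexch : ∀ B ∈ Q, ∀ A ∈ P, (Z * B * star Z) * A ∈ W := by
    intro B hB A hA
    have hBpQ : B + Γ * B * Γ ∈ Q := add_mem hB (hQΓ B hB)
    have hBmQ : B - Γ * B * Γ ∈ Q := sub_mem hB (hQΓ B hB)
    have hApP : A + Γ * A * Γ ∈ P := add_mem hA (hPΓ A hA)
    have hAmP : A - Γ * A * Γ ∈ P := sub_mem hA (hPΓ A hA)
    have hBpe : Γ * (B + Γ * B * Γ) = (B + Γ * B * Γ) * Γ := hev1 _ (hplus0 B)
    have hBme : Γ * (B - Γ * B * Γ) = -((B - Γ * B * Γ) * Γ) := hodd1 _ (hminus0 B)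
    have hApe : Γ * (A + Γ * A * Γ) = (A + Γ * A * Γ) * Γ := hev1 _ (hplus0 A)
    have hAme : Γ * (A - Γ * A * Γ) = -((A - Γ * A * Γ) * Γ) := hodd1 _ (hminus0 A)
    have hZBp : Z * (B + Γ * B * Γ) * star Z = B + Γ * B * Γ := heven _ hBpe
    have hZBm : Z * (B - Γ * B * Γ) * star Z = (-Complex.I) • ((B - Γ * B * Γ) * Γ) := hoddZ _ hBme
    -- commutation facts
    have c1 : ∀ A' ∈ P, (Z * (B + Γ * B * Γ) * star Z) * A' = A' * (Z * (B + Γ * B * Γ) * star Z) := by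
      intro A' hA'
      rw [hZBp]
      exact hPQ hA' _ hBpQ
    have oddcomm : ∀ A' : H →L[ℂ] H, A' ∈ P → Γ * A' = A' * Γ →
        (Z * (B - Γ * B * Γ) * star Z) * A' = A' * (Z * (B - Γ * B * Γ) * star Z) := by
      intro A' hA' hA'e
      have core : (B - Γ * B * Γ) * Γ * A' = A' * ((B - Γ * B * Γ) * Γ) := by
        calc (B - Γ * B * Γ) * Γ * A' = (B - Γ * B * Γ) * (Γ * A') := by rw [mul_assoc]
          _ = (B - Γ * B * Γ) * (A' * Γ) := by rw [hA'e]
          _ = ((B - Γ * B * Γ) * A') * Γ := (mul_assoc _ _ _).symm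
          _ = (A' * (B - Γ * B * Γ)) * Γ := by rw [hPQ hA' _ hBmQ]
          _ = A' * ((B - Γ * B * Γ) * Γ) := by rw [mul_assoc]
      calc (Z * (B - Γ * B * Γ) * star Z) * A'
          = ((-Complex.I) • ((B - Γ * B * Γ) * Γ)) * A' := by rw [hZBm]
        _ = (-Complex.I) • ((B - Γ * B * Γ) * Γ * A') := smul_mul_assoc _ _ _
        _ = (-Complex.I) • (A' * ((B - Γ * B * Γ) * Γ)) := by rw [core]
        _ = A' * ((-Complex.I) • ((B - Γ * B * Γ) * Γ)) := (mul_smul_comm _ _ _).symm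
        _ = A' * (Z * (B - Γ * B * Γ) * star Z) := by rw [hZBm]
    have c3 : (Z * (B - Γ * B * Γ) * star Z) * (A - Γ * A * Γ) =
        -((A - Γ * A * Γ) * (Z * (B - Γ * B * Γ) * star Z)) := by
      have core : (B - Γ * B * Γ) * Γ * (A - Γ * A * Γ) =
          -((A - Γ * A * Γ) * ((B - Γ * B * Γ) * Γ)) := by
        calc (B - Γ * B * Γ) * Γ * (A - Γ * A * Γ)
            = (B - Γ * B * Γ) * (Γ * (A - Γ * A * Γ)) := by rw [mul_assoc]
          _ = (B - Γ * B * Γ) * (-((A - Γ * A * Γ) * Γ)) := by rw [hAme]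
          _ = -((B - Γ * B * Γ) * ((A - Γ * A * Γ) * Γ)) := mul_neg _ _
          _ = -(((B - Γ * B * Γ) * (A - Γ * A * Γ)) * Γ) := congrArg Neg.neg (mul_assoc _ _ _).symm
          _ = -(((A - Γ * A * Γ) * (B - Γ * B * Γ)) * Γ) := by rw [hPQ hAmP _ hBmQ]
          _ = -((A - Γ * A * Γ) * ((B - Γ * B * Γ) * Γ)) := congrArg Neg.neg (mul_assoc _ _ _)
      calc (Z * (B - Γ * B * Γ) * star Z) * (A - Γ * A * Γ)
          = ((-Complex.I) • ((B - Γ * B * Γ) * Γ)) * (A - Γ * A * Γ) := by rw [hZBm]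
        _ = (-Complex.I) • ((B - Γ * B * Γ) * Γ * (A - Γ * A * Γ)) := smul_mul_assoc _ _ _
        _ = (-Complex.I) • (-((A - Γ * A * Γ) * ((B - Γ * B * Γ) * Γ))) := by rw [core]
        _ = -((-Complex.I) • ((A - Γ * A * Γ) * ((B - Γ * B * Γ) * Γ))) := smul_neg _ _
        _ = -((A - Γ * A * Γ) * ((-Complex.I) • ((B - Γ * B * Γ) * Γ))) := by
              rw [mul_smul_comm]
        _ = -((A - Γ * A * Γ) * (Z * (B - Γ * B * Γ) * star Z)) := by rw [hZBm]
    -- expansion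
    have expand : (Z * B * star Z) * A =
        (2⁻¹ : ℂ) • ((Z * (B + Γ * B * Γ) * star Z) * A)
        + (4⁻¹ : ℂ) • ((Z * (B - Γ * B * Γ) * star Z) * (A + Γ * A * Γ))
        + (4⁻¹ : ℂ) • ((Z * (B - Γ * B * Γ) * star Z) * (A - Γ * A * Γ)) := by
      simp only [mul_add, add_mul, mul_sub, sub_mul, smul_add, smul_sub, smul_smul,
        smul_mul_assoc, mul_smul_comm, mul_assoc]
      module
    rw [expand]
    refine add_mem (add_mem ?_ ?_) ?_
    · refine Submodule.smul_mem W _ ?_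
      rw [c1 A hA]
      exact hGmem A hA _ hBpQ
    · refine Submodule.smul_mem W _ ?_
      rw [show (Z * (B - Γ * B * Γ) * star Z) * (A + Γ * A * Γ) =
        (A + Γ * A * Γ) * (Z * (B - Γ * B * Γ) * star Z) from oddcomm _ hApP hApe]
      exact hGmem _ hApP _ hBmQ
    · refine Submodule.smul_mem W _ ?_
      rw [c3]
      exact neg_mem (hGmem _ hAmP _ hBmQ)
  -- closure properties of W
  have hWleft : ∀ A ∈ P, ∀ x ∈ W, A * x ∈ W := by
    intro A hA x hx
    refine Submodule.span_induction ?_ ?_ ?_ ?_ hx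
    · rintro y ⟨A', hA', B', hB', rfl⟩
      rw [← mul_assoc]
      exact hGmem _ (mul_mem hA hA') _ hB'
    · rw [mul_zero]; exact zero_mem W
    · intro y z _ _ hy hz; rw [mul_add]; exact add_mem hy hz
    · intro c y _ hy; rw [mul_smul_comm]; exact Submodule.smul_mem W c hy
  have hWrightQt : ∀ B ∈ Q, ∀ x ∈ W, x * (Z * B * star Z) ∈ W := by
    intro B hB x hx
    refine Submodule.span_induction ?_ ?_ ?_ ?_ hx
    · rintro y ⟨A', hA', B', hB', rfl⟩
      have key : (A' * (Z * B' * star Z)) * (Z * B * star Z) = A' * (Z * (B' * B) * star Z) := by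
        have h2 : (Z * B' * star Z) * (Z * B * star Z) = Z * (B' * B) * star Z := by
          calc (Z * B' * star Z) * (Z * B * star Z)
              = Z * (B' * ((star Z * Z) * (B * star Z))) := by simp only [mul_assoc]
            _ = Z * (B' * (B * star Z)) := by rw [hZsZ, one_mul]
            _ = Z * (B' * B) * star Z := by simp only [mul_assoc]
        rw [mul_assoc, h2]
      rw [key]
      exact hGmem _ hA' _ (mul_mem hB' hB)
    · rw [zero_mul]; exact zero_mem W
    · intro y z _ _ hy hz; rw [add_mul]; exact add_mem hy hz
    · intro c y _ hy; rw [smul_mul_assoc]; exact Submodule.smul_mem W c hy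
  have hWmid : ∀ B ∈ Q, ∀ x ∈ W, (Z * B * star Z) * x ∈ W := by
    intro B hB x hx
    refine Submodule.span_induction ?_ ?_ ?_ ?_ hx
    · rintro y ⟨A', hA', B', hB', rfl⟩
      rw [← mul_assoc]
      exact hWrightQt B' hB' _ (hexch B hB A' hA')
    · rw [mul_zero]; exact zero_mem W
    · intro y z _ _ hy hz; rw [mul_add]; exact add_mem hy hz
    · intro c y _ hy; rw [mul_smul_comm]; exact Submodule.smul_mem W c hy
  have hWmul : ∀ x ∈ W, ∀ y ∈ W, x * y ∈ W := by
    intro x hx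
    refine Submodule.span_induction ?_ ?_ ?_ ?_ hx
    · rintro z ⟨A', hA', B', hB', rfl⟩ y hy
      rw [mul_assoc]
      exact hWleft A' hA' _ (hWmid B' hB' y hy)
    · intro y _; rw [zero_mul]; exact zero_mem W
    · intro z t _ _ hz ht y hy; rw [add_mul]; exact add_mem (hz y hy) (ht y hy)
    · intro c z _ hz y hy; rw [smul_mul_assoc]; exact Submodule.smul_mem W c (hz y hy)
  have hWstar : ∀ x ∈ W, star x ∈ W := by
    intro x hx
    refine Submodule.span_induction ?_ ?_ ?_ ?_ hx
    · rintro y ⟨A', hA', B', hB', rfl⟩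
      have key : star (A' * (Z * B' * star Z)) = (Z * star B' * star Z) * star A' := by
        rw [star_mul, star_mul, star_mul, star_star]
        simp only [mul_assoc]
      rw [key]
      exact hexch (star B') (star_mem hB') (star A') (star_mem hA')
    · rw [star_zero]; exact zero_mem W
    · intro y z _ _ hy hz; rw [star_add]; exact add_mem hy hz
    · intro c y _ hy; rw [star_smul]; exact Submodule.smul_mem W _ hy
  -- the averaging map
  set E : (H →L[ℂ] H) → (H →L[ℂ] H) := fun T =>
    (4⁻¹ : ℂ) • (T + VL * T * star VL + VR * T * star VR + u4 * T * star u4) with hEdef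
  have hEgen : ∀ A ∈ P, ∀ B ∈ Q,
      E (A * (Z * B * star Z)) =
        ((2⁻¹ : ℂ) • (A + Γ * A * Γ)) *
          ((2⁻¹ : ℂ) • ((Z * B * star Z) + (Z * (Γ * B * Γ) * star Z))) := by
    intro A hA B hB
    have t1 : VL * (A * (Z * B * star Z)) * star VL = (Γ * A * Γ) * (Z * B * star Z) := by
      rw [hsplit VL A (Z * B * star Z) hV1, hVP' A hA, cVL_M B hB]
    have t2 : VR * (A * (Z * B * star Z)) * star VR = A * (Z * (Γ * B * Γ) * star Z) := by
      rw [hsplit VR A (Z * B * star Z) hVR1, cVR_P A hA, cVR_M B hB]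
    have t3 : u4 * (A * (Z * B * star Z)) * star u4 = (Γ * A * Γ) * (Z * (Γ * B * Γ) * star Z) := by
      rw [hsplit u4 A (Z * B * star Z) hu41, cu4_P A hA, cu4_M B hB]
    show (4⁻¹ : ℂ) • (A * (Z * B * star Z) + VL * (A * (Z * B * star Z)) * star VL
        + VR * (A * (Z * B * star Z)) * star VR + u4 * (A * (Z * B * star Z)) * star u4) = _
    rw [t1, t2, t3]
    simp only [mul_add, add_mul, smul_add, smul_smul, smul_mul_assoc, mul_smul_comm, mul_assoc]
    module
  have hE0 : E 0 = 0 := by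
    show (4⁻¹ : ℂ) • ((0 : H →L[ℂ] H) + VL * 0 * star VL + VR * 0 * star VR + u4 * 0 * star u4) = 0
    simp
  have hEadd : ∀ x y : H →L[ℂ] H, E (x + y) = E x + E y := by
    intro x y
    show (4⁻¹ : ℂ) • ((x + y) + VL * (x + y) * star VL + VR * (x + y) * star VR
        + u4 * (x + y) * star u4) = _
    simp only [mul_add, add_mul]
    module
  have hEsmul : ∀ (c : ℂ) (x : H →L[ℂ] H), E (c • x) = c • E x := by
    intro c x
    show (4⁻¹ : ℂ) • (c • x + VL * (c • x) * star VL + VR * (c • x) * star VR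
        + u4 * (c • x) * star u4) = _
    simp only [mul_smul_comm, smul_mul_assoc]
    module
  -- norm preservation
  have hnormu : ∀ u : H →L[ℂ] H, star u * u = 1 → ∀ z : H, ‖u z‖ = ‖z‖ := by
    intro u hu z
    have h3 : ContinuousLinearMap.adjoint u (u z) = z := by
      have h4 : (star u * u) z = (1 : H →L[ℂ] H) z := by rw [hu]
      simpa only [ContinuousLinearMap.mul_apply, ContinuousLinearMap.one_apply,
        ContinuousLinearMap.star_eq_adjoint] using h4
    have h1 : inner ℂ (u z) (u z) = inner ℂ z z := by
      calc inner ℂ (u z) (u z)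
          = inner ℂ (ContinuousLinearMap.adjoint u (u z)) z :=
            (ContinuousLinearMap.adjoint_inner_left u z (u z)).symm
        _ = inner ℂ z z := by rw [h3]
    have h5 : ‖u z‖ ^ 2 = ‖z‖ ^ 2 := by
      rw [inner_self_eq_norm_sq_to_K, inner_self_eq_norm_sq_to_K] at h1
      exact_mod_cast h1
    have h6 := congrArg Real.sqrt h5
    rwa [Real.sqrt_sq (norm_nonneg _), Real.sqrt_sq (norm_nonneg _)] at h6
  -- now prove the set equality
  apply subset_antisymm
  · -- hard direction
    rintro x ⟨⟨hxM, hxVL⟩, hxVR⟩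
    have hxVLc : VL * x = x * VL := hxVL VL rfl
    have hxVRc : VR * x = x * VR := hxVR VR rfl
    have hxu4c : u4 * x = x * u4 := by
      rw [hu4]
      calc VL * VR * x = VL * (VR * x) := by rw [mul_assoc]
        _ = VL * (x * VR) := by rw [hxVRc]
        _ = (VL * x) * VR := by rw [mul_assoc]
        _ = (x * VL) * VR := by rw [hxVLc]
        _ = x * (VL * VR) := by rw [mul_assoc]
    have hxsVL : star VL * x = x * star VL := hswap VL x hV1 hV2 hxVLc
    have hxsVR : star VR * x = x * star VR := hswap VR x hVR1 hVR2 hxVRc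
    have hxsu4 : star u4 * x = x * star u4 := hswap u4 x hu41 hu42 hxu4c
    have hEx : E x = x := by
      show (4⁻¹ : ℂ) • (x + VL * x * star VL + VR * x * star VR + u4 * x * star u4) = x
      have e1 : VL * x * star VL = x := by rw [hxVLc, mul_assoc, hV2, mul_one]
      have e2 : VR * x * star VR = x := by rw [hxVRc, mul_assoc, hVR2, mul_one]
      have e3 : u4 * x * star u4 = x := by rw [hxu4c, mul_assoc, hu42, mul_one]
      rw [e1, e2, e3]
      module
    have hxc : ∀ c ∈ Set.centralizer (W : Set (H →L[ℂ] H)), c * x = x * c := by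
      intro c hc
      apply hxM
      intro m hm
      rcases hm with hm | hm
      · exact hc _ (hPW m hm)
      · rw [hQt] at hm
        obtain ⟨B, hB, rfl⟩ := hm
        rw [← ContinuousLinearMap.star_eq_adjoint]
        exact hc _ (hQtW B hB)
    intro Y hY
    -- E w commutes with Y for w in W
    have hEcomm : ∀ w ∈ W, Y * E w = E w * Y := by
      intro w hw
      refine Submodule.span_induction ?_ ?_ ?_ ?_ hw
      · rintro g ⟨A, hA, B, hB, rfl⟩
        rw [hEgen A hA B hB]
        have hBt : (2⁻¹ : ℂ) • ((Z * B * star Z) + (Z * (Γ * B * Γ) * star Z)) =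
            (2⁻¹ : ℂ) • (B + Γ * B * Γ) := by
          congr 1
          have h7 : (Z * B * star Z) + (Z * (Γ * B * Γ) * star Z) =
              Z * (B + Γ * B * Γ) * star Z := by
            simp only [mul_add, add_mul]
          rw [h7]
          exact heven _ (hev1 _ (hplus0 B))
        rw [hBt]
        have hApPp : (2⁻¹ : ℂ) • (A + Γ * A * Γ) ∈ Pplus := by
          rw [hPplus]
          refine ⟨P.toStarSubalgebra.toSubalgebra.smul_mem (add_mem hA (hPΓ A hA)) _, ?_⟩
          rw [mul_smul_comm, smul_mul_assoc, hplus0 A]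
        have hBtQp : (2⁻¹ : ℂ) • (B + Γ * B * Γ) ∈ Qplus := by
          rw [hQplus]
          refine ⟨Q.toStarSubalgebra.toSubalgebra.smul_mem (add_mem hB (hQΓ B hB)) _, ?_⟩
          rw [mul_smul_comm, smul_mul_assoc, hplus0 B]
        have h1 : ((2⁻¹ : ℂ) • (A + Γ * A * Γ)) * Y = Y * ((2⁻¹ : ℂ) • (A + Γ * A * Γ)) :=
          hY _ (Set.mem_union_left _ hApPp)
        have h2 : ((2⁻¹ : ℂ) • (B + Γ * B * Γ)) * Y = Y * ((2⁻¹ : ℂ) • (B + Γ * B * Γ)) :=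
          hY _ (Set.mem_union_right _ hBtQp)
        calc Y * (((2⁻¹ : ℂ) • (A + Γ * A * Γ)) * ((2⁻¹ : ℂ) • (B + Γ * B * Γ)))
            = (Y * ((2⁻¹ : ℂ) • (A + Γ * A * Γ))) * ((2⁻¹ : ℂ) • (B + Γ * B * Γ)) :=
              (mul_assoc _ _ _).symm
          _ = (((2⁻¹ : ℂ) • (A + Γ * A * Γ)) * Y) * ((2⁻¹ : ℂ) • (B + Γ * B * Γ)) := by
              rw [h1]
          _ = ((2⁻¹ : ℂ) • (A + Γ * A * Γ)) * (Y * ((2⁻¹ : ℂ) • (B + Γ * B * Γ))) :=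
              mul_assoc _ _ _
          _ = ((2⁻¹ : ℂ) • (A + Γ * A * Γ)) * (((2⁻¹ : ℂ) • (B + Γ * B * Γ)) * Y) := by
              rw [h2]
          _ = (((2⁻¹ : ℂ) • (A + Γ * A * Γ)) * ((2⁻¹ : ℂ) • (B + Γ * B * Γ))) * Y :=
              (mul_assoc _ _ _).symm
      · rw [hE0, mul_zero, zero_mul]
      · intro y z _ _ hy hz
        rw [hEadd, mul_add, add_mul, hy, hz]
      · intro c y _ hy
        rw [hEsmul, mul_smul_comm, smul_mul_assoc, hy]
    -- approximation argument
    have main : ∀ ξ : H, x (Y ξ) = Y (x ξ) := by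
      intro ξ
      have hbound : ∀ ε : ℝ, 0 < ε → ‖x (Y ξ) - Y (x ξ)‖ < ε * (1 + ‖Y‖) := by
        intro ε hε
        obtain ⟨w, hwW, hwa⟩ := vna_approx W hW1 hWmul hWstar x hxc 8
          ![ξ, star VL ξ, star VR ξ, star u4 ξ, Y ξ, star VL (Y ξ), star VR (Y ξ), star u4 (Y ξ)]
          ε hε
        have hEdiff : x - E w = (4⁻¹ : ℂ) • ((x - w) + VL * (x - w) * star VL
            + VR * (x - w) * star VR + u4 * (x - w) * star u4) := by
          conv_lhs => rw [← hEx]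
          show (4⁻¹ : ℂ) • (x + VL * x * star VL + VR * x * star VR + u4 * x * star u4)
              - (4⁻¹ : ℂ) • (w + VL * w * star VL + VR * w * star VR + u4 * w * star u4) = _
          simp only [mul_sub, sub_mul]
          module
        have hEest : ∀ ζ : H, ‖x ζ - w ζ‖ < ε → ‖x (star VL ζ) - w (star VL ζ)‖ < ε →
            ‖x (star VR ζ) - w (star VR ζ)‖ < ε → ‖x (star u4 ζ) - w (star u4 ζ)‖ < ε →
            ‖x ζ - E w ζ‖ < ε := by
          intro ζ n0 n1 n2 n3
          have happ : x ζ - E w ζ = (4⁻¹ : ℂ) • ((x - w) ζ + VL ((x - w) (star VL ζ))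
              + VR ((x - w) (star VR ζ)) + u4 ((x - w) (star u4 ζ))) := by
            have h5 := congrArg (fun (T : H →L[ℂ] H) => T ζ) hEdiff
            simpa only [ContinuousLinearMap.sub_apply, ContinuousLinearMap.add_apply,
              ContinuousLinearMap.coe_smul', Pi.smul_apply,
              ContinuousLinearMap.mul_apply] using h5
          rw [happ, norm_smul]
          have h6 : ‖(4⁻¹ : ℂ)‖ = 4⁻¹ := by norm_num
          rw [h6]
          have b0 : ‖(x - w) ζ‖ < ε := by
            rw [ContinuousLinearMap.sub_apply]; exact n0
          have b1 : ‖VL ((x - w) (star VL ζ))‖ < ε := by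
            rw [hnormu VL hV1, ContinuousLinearMap.sub_apply]; exact n1
          have b2 : ‖VR ((x - w) (star VR ζ))‖ < ε := by
            rw [hnormu VR hVR1, ContinuousLinearMap.sub_apply]; exact n2
          have b3 : ‖u4 ((x - w) (star u4 ζ))‖ < ε := by
            rw [hnormu u4 hu41, ContinuousLinearMap.sub_apply]; exact n3
          have htri : ‖(x - w) ζ + VL ((x - w) (star VL ζ)) + VR ((x - w) (star VR ζ))
              + u4 ((x - w) (star u4 ζ))‖ ≤ ‖(x - w) ζ‖ + ‖VL ((x - w) (star VL ζ))‖
              + ‖VR ((x - w) (star VR ζ))‖ + ‖u4 ((x - w) (star u4 ζ))‖ := by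
            calc ‖(x - w) ζ + VL ((x - w) (star VL ζ)) + VR ((x - w) (star VR ζ))
                + u4 ((x - w) (star u4 ζ))‖
                ≤ ‖(x - w) ζ + VL ((x - w) (star VL ζ)) + VR ((x - w) (star VR ζ))‖
                  + ‖u4 ((x - w) (star u4 ζ))‖ := norm_add_le _ _
              _ ≤ ‖(x - w) ζ + VL ((x - w) (star VL ζ))‖ + ‖VR ((x - w) (star VR ζ))‖
                  + ‖u4 ((x - w) (star u4 ζ))‖ := by
                    have := norm_add_le ((x - w) ζ + VL ((x - w) (star VL ζ)))
                      (VR ((x - w) (star VR ζ)))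
                    linarith
              _ ≤ ‖(x - w) ζ‖ + ‖VL ((x - w) (star VL ζ))‖ + ‖VR ((x - w) (star VR ζ))‖
                  + ‖u4 ((x - w) (star u4 ζ))‖ := by
                    have := norm_add_le ((x - w) ζ) (VL ((x - w) (star VL ζ)))
                    linarith
          calc (4⁻¹ : ℝ) * ‖(x - w) ζ + VL ((x - w) (star VL ζ)) + VR ((x - w) (star VR ζ))
              + u4 ((x - w) (star u4 ζ))‖
              ≤ 4⁻¹ * (‖(x - w) ζ‖ + ‖VL ((x - w) (star VL ζ))‖ + ‖VR ((x - w) (star VR ζ))‖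
                + ‖u4 ((x - w) (star u4 ζ))‖) := by
                  apply mul_le_mul_of_nonneg_left htri
                  norm_num
            _ < ε := by linarith
        have hb0 : ‖x ξ - E w ξ‖ < ε := hEest ξ (hwa 0) (hwa 1) (hwa 2) (hwa 3)
        have hb1 : ‖x (Y ξ) - E w (Y ξ)‖ < ε := hEest (Y ξ) (hwa 4) (hwa 5) (hwa 6) (hwa 7)
        have hmid : Y (E w ξ) = E w (Y ξ) := by
          have h7 := congrArg (fun (T : H →L[ℂ] H) => T ξ) (hEcomm w hwW)
          simpa only [ContinuousLinearMap.mul_apply] using h7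
        calc ‖x (Y ξ) - Y (x ξ)‖
            ≤ ‖x (Y ξ) - E w (Y ξ)‖ + ‖E w (Y ξ) - Y (x ξ)‖ := by
              simpa [dist_eq_norm] using dist_triangle (x (Y ξ)) (E w (Y ξ)) (Y (x ξ))
          _ = ‖x (Y ξ) - E w (Y ξ)‖ + ‖Y (E w ξ) - Y (x ξ)‖ := by rw [hmid]
          _ = ‖x (Y ξ) - E w (Y ξ)‖ + ‖Y (E w ξ - x ξ)‖ := by rw [map_sub]
          _ ≤ ‖x (Y ξ) - E w (Y ξ)‖ + ‖Y‖ * ‖E w ξ - x ξ‖ :=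
              add_le_add_right (Y.le_opNorm _) _
          _ < ε + ‖Y‖ * ε := by
              have h8 : ‖E w ξ - x ξ‖ < ε := by rwa [norm_sub_rev] at hb0
              have h9 : ‖Y‖ * ‖E w ξ - x ξ‖ ≤ ‖Y‖ * ε :=
                mul_le_mul_of_nonneg_left (le_of_lt h8) (norm_nonneg Y)
              linarith
          _ = ε * (1 + ‖Y‖) := by ring
      by_contra hne
      have hpos : 0 < ‖x (Y ξ) - Y (x ξ)‖ := by
        rw [norm_pos_iff]
        exact sub_ne_zero.2 hne
      have h1Y : (0 : ℝ) < 1 + ‖Y‖ := by positivity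
      have h8 := hbound (‖x (Y ξ) - Y (x ξ)‖ / (2 * (1 + ‖Y‖))) (by positivity)
      have h9 : ‖x (Y ξ) - Y (x ξ)‖ / (2 * (1 + ‖Y‖)) * (1 + ‖Y‖)
          = ‖x (Y ξ) - Y (x ξ)‖ / 2 := by
        field_simp
      rw [h9] at h8
      linarith
    apply ContinuousLinearMap.ext
    intro ξ
    rw [ContinuousLinearMap.mul_apply, ContinuousLinearMap.mul_apply]
    exact (main ξ).symm
  · -- easy direction
    intro x hx
    have hVLmem : VL ∈ Set.centralizer (Pplus ∪ Qplus) := by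
      intro m hm
      rcases hm with hm | hm
      · rw [hPplus] at hm
        exact (hcomm_of_conj VL m hV1 (by rw [hVP' m hm.1, hm.2])).symm
      · rw [hQplus] at hm
        exact (hcomm_of_conj VL m hV1 (hVQ' m hm.1)).symm
    have hΓmem : Γ ∈ Set.centralizer (Pplus ∪ Qplus) := by
      intro m hm
      have he : Γ * m * Γ = m := by
        rcases hm with hm | hm
        · rw [hPplus] at hm; exact hm.2
        · rw [hQplus] at hm; exact hm.2
      exact (hev1 m he).symm
    have hVRmem : VR ∈ Set.centralizer (Pplus ∪ Qplus) := by
      rw [hVR]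
      exact Set.mul_mem_centralizer hΓmem hVLmem
    have hsub : Pplus ∪ Qplus ⊆ (P : Set (H →L[ℂ] H)) ∪ Qt := by
      rintro m (hm | hm)
      · rw [hPplus] at hm; exact Or.inl hm.1
      · rw [hQplus] at hm
        refine Or.inr ?_
        rw [hQt]
        refine ⟨m, hm.1, ?_⟩
        rw [← ContinuousLinearMap.star_eq_adjoint]
        exact heven m (hev1 m hm.2)
    refine ⟨⟨?_, ?_⟩, ?_⟩
    · intro m hm
      exact hx _ (Set.centralizer_subset hsub hm)
    · intro m hm
      have hm' : m = VL := hm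
      rw [hm']
      exact hx _ hVLmem
    · intro m hm
      have hm' : m = VR := hm
      rw [hm']
      exact hx _ hVRmem
end

section
/- Suppose V is a left disorder operator. If A ∈ F = (P^t)' ∩ Q' is odd (ΓAΓ = −A), then AV lies in P' ∩ Q' and is odd; conversely, if B ∈ P' ∩ Q' is odd, then BV* lies in F and is odd. Hence right multiplication by V is a bijection from the set of odd elements of the twisted local algebra F = (P^t)' ∩ Q' onto the set of odd elements of the untwisted local algebra P' ∩ Q'. -/
variable {H : Type*} [NormedAddCommGroup H] [InnerProductSpace ℂ H] [CompleteSpace H]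

set_option maxHeartbeats 1000000 in
/-- Suppose `V` is a left disorder operator. If `A ∈ F = (P^t)' ∩ Q'` is odd,
then `AV` lies in `P' ∩ Q'` and is odd; conversely, if `B ∈ P' ∩ Q'` is odd, then `BV*` lies in
`F` and is odd. Hence right multiplication by `V` is a bijection from the odd elements of the
twisted local algebra `F` onto the odd elements of the untwisted local algebra `P' ∩ Q'`. -/
theorem odd_twisted_untwisted_bijection
    (Γ : H →L[ℂ] H) (hΓsa : ContinuousLinearMap.adjoint Γ = Γ) (hΓ2 : Γ * Γ = 1)
    (Z : H →L[ℂ] H)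
    (hZ : Z = ((1 - Complex.I) / 2) • (1 : H →L[ℂ] H) + ((1 + Complex.I) / 2) • Γ)
    (P Q : VonNeumannAlgebra H)
    (hPΓ : ∀ A ∈ P, Γ * A * Γ ∈ P) (hQΓ : ∀ A ∈ Q, Γ * A * Γ ∈ Q)
    (hPQ : (P : Set (H →L[ℂ] H)) ⊆ Set.centralizer (Q : Set (H →L[ℂ] H)))
    (V : H →L[ℂ] H) (hV : IsLeftDisorder Γ P Q V)
    -- the twisted local field algebra F = (P^t)' ∩ Q'
    -- and the untwisted local algebra Uloc = P' ∩ Q'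
    (F Uloc : Set (H →L[ℂ] H))
    (hF : F = Set.centralizer
        ((fun B => Z * B * ContinuousLinearMap.adjoint Z) '' (P : Set (H →L[ℂ] H)))
      ∩ Set.centralizer (Q : Set (H →L[ℂ] H)))
    (hUloc : Uloc = Set.centralizer (P : Set (H →L[ℂ] H))
      ∩ Set.centralizer (Q : Set (H →L[ℂ] H))) :
    (∀ A ∈ F, Γ * A * Γ = -A → A * V ∈ Uloc ∧ Γ * (A * V) * Γ = -(A * V)) ∧
    (∀ B ∈ Uloc, Γ * B * Γ = -B →
      B * ContinuousLinearMap.adjoint V ∈ F ∧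
      Γ * (B * ContinuousLinearMap.adjoint V) * Γ = -(B * ContinuousLinearMap.adjoint V)) ∧
    Set.BijOn (fun A => A * V)
      {A : H →L[ℂ] H | A ∈ F ∧ Γ * A * Γ = -A}
      {B : H →L[ℂ] H | B ∈ Uloc ∧ Γ * B * Γ = -B} := by
  obtain ⟨⟨hWV, hVW⟩, hVΓ, hVP, hVQ⟩ := hV
  set W := ContinuousLinearMap.adjoint V with hWdef
  -- Γ commutes with W
  have hWΓ : W * Γ = Γ * W := by
    have := congrArg star hVΓ
    simpa only [star_mul, ContinuousLinearMap.star_eq_adjoint, hΓsa, ← hWdef] using this.symm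
  -- adjoint of Z
  have hZa : ContinuousLinearMap.adjoint Z
      = ((1 + Complex.I) / 2) • (1 : H →L[ℂ] H) + ((1 - Complex.I) / 2) • Γ := by
    rw [← ContinuousLinearMap.star_eq_adjoint, hZ]
    simp [star_smul, ContinuousLinearMap.star_eq_adjoint, hΓsa, sub_eq_add_neg]
  -- twist formula
  have twist : ∀ B : H →L[ℂ] H, Z * B * ContinuousLinearMap.adjoint Z
      = ((1:ℂ)/2) • (B + Γ * B * Γ) + (Complex.I/2) • (Γ * B - B * Γ) := by
    intro B
    rw [hZa, hZ]
    simp only [add_mul, mul_add, smul_mul_assoc, mul_smul_comm, smul_smul, one_mul, mul_one,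
      smul_add, smul_sub]
    match_scalars <;> simp [Complex.ext_iff, Complex.I_sq] <;> norm_num
  -- Γ² applied forms
  have hΓΓl : ∀ X : H →L[ℂ] H, Γ * (Γ * X) = X := fun X => by
    rw [← mul_assoc, hΓ2, one_mul]
  have hΓΓr : ∀ X : H →L[ℂ] H, X * Γ * Γ = X := fun X => by
    rw [mul_assoc, hΓ2, mul_one]
  -- intertwining of V, W with P
  have hVB : ∀ B ∈ P, V * B = Γ * B * Γ * V := by
    intro B hB
    have h := hVP B hB
    calc V * B = V * B * (W * V) := by rw [hWV, mul_one]
    _ = (V * B * W) * V := by noncomm_ring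
    _ = Γ * B * Γ * V := by rw [h]
  have hWB : ∀ B ∈ P, W * B = Γ * B * Γ * W := by
    intro B hB
    have h := hVP _ (hPΓ B hB)
    have h' : V * (Γ * B * Γ) * W = B := by
      rw [h]; calc Γ * (Γ * B * Γ) * Γ = Γ * Γ * B * (Γ * Γ) := by noncomm_ring
      _ = B := by rw [hΓ2]; noncomm_ring
    calc W * B = W * (V * (Γ * B * Γ) * W) := by rw [h']
    _ = (W * V) * (Γ * B * Γ) * W := by noncomm_ring
    _ = Γ * B * Γ * W := by rw [hWV, one_mul]
  -- commutation of V, W with Q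
  have hVD : ∀ D ∈ Q, V * D = D * V := by
    intro D hD
    have h := hVQ D hD
    calc V * D = V * D * (W * V) := by rw [hWV, mul_one]
    _ = (V * D * W) * V := by noncomm_ring
    _ = D * V := by rw [h]
  have hWD : ∀ D ∈ Q, W * D = D * W := by
    intro D hD
    have h := hVQ D hD
    calc W * D = W * (V * D * W) := by rw [h]
    _ = (W * V) * D * W := by noncomm_ring
    _ = D * W := by rw [hWV, one_mul]
  have hr1 : ∀ X : H →L[ℂ] H, Γ * (Γ * X) = X := fun X => by rw [← mul_assoc, hΓ2, one_mul]
  have hGG : ∀ X : H →L[ℂ] H, Γ * (X * Γ) * Γ = Γ * X := fun X => by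
    rw [mul_assoc, mul_assoc, hΓ2, mul_one]
  have hsand : ∀ X : H →L[ℂ] H, Γ * (Γ * X * Γ) * Γ = X := fun X => by
    rw [mul_assoc, mul_assoc, hΓ2, mul_one, ← mul_assoc, hΓ2, one_mul]
  -- FORWARD DIRECTION
  have forward : ∀ A ∈ F, Γ * A * Γ = -A → A * V ∈ Uloc ∧ Γ * (A * V) * Γ = -(A * V) := by
    intro A hA hodd
    rw [hF] at hA
    obtain ⟨hA1, hA2⟩ := hA
    have hΓA : Γ * A = -(A * Γ) := by
      have h := congrArg (fun X => X * Γ) hodd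
      rw [mul_assoc, mul_assoc, hΓ2, mul_one, neg_mul] at h
      exact h
    have hr2 : ∀ X : H →L[ℂ] H, Γ * (A * X) = -(A * (Γ * X)) := fun X => by
      rw [← mul_assoc, hΓA, neg_mul, mul_assoc]
    -- the key commutation relation: A * B = Γ * B * Γ * A for B ∈ P
    have key : ∀ B ∈ P, A * B = Γ * B * Γ * A := by
      intro B hB
      have hTB : (Z * B * ContinuousLinearMap.adjoint Z) * A
          = A * (Z * B * ContinuousLinearMap.adjoint Z) :=
        Set.mem_centralizer_iff.mp hA1 _ ⟨B, hB, rfl⟩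
      have hSB : (Z * (Γ * B * Γ) * ContinuousLinearMap.adjoint Z) * A
          = A * (Z * (Γ * B * Γ) * ContinuousLinearMap.adjoint Z) :=
        Set.mem_centralizer_iff.mp hA1 _ ⟨Γ * B * Γ, hPΓ B hB, rfl⟩
      rw [twist B] at hTB
      rw [twist (Γ * B * Γ)] at hSB
      -- hSB now involves (Γ*B*Γ + B) and (B*Γ - Γ*B*Γ*Γ)... normalize
      have hSB' : ((1:ℂ)/2) • ((B + Γ * B * Γ) * A) - (Complex.I/2) • ((Γ * B - B * Γ) * A)
          = ((1:ℂ)/2) • (A * (B + Γ * B * Γ)) - (Complex.I/2) • (A * (Γ * B - B * Γ)) := by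
        have e1 : Γ * B * Γ + Γ * (Γ * B * Γ) * Γ = B + Γ * B * Γ := by rw [hsand]; abel
        have e2 : Γ * (Γ * B * Γ) - Γ * B * Γ * Γ = -(Γ * B - B * Γ) := by
          rw [← mul_assoc, ← mul_assoc, hΓ2, one_mul, mul_assoc, hΓ2, mul_one]; abel
        rw [e1, e2] at hSB
        simpa only [smul_neg, ← sub_eq_add_neg, add_mul, sub_mul, mul_add, mul_sub,
          smul_mul_assoc, mul_smul_comm] using hSB
      have hTB' : ((1:ℂ)/2) • ((B + Γ * B * Γ) * A) + (Complex.I/2) • ((Γ * B - B * Γ) * A)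
          = ((1:ℂ)/2) • (A * (B + Γ * B * Γ)) + (Complex.I/2) • (A * (Γ * B - B * Γ)) := by
        simpa only [add_mul, smul_mul_assoc, mul_add, mul_smul_comm] using hTB
      have hY : (B + Γ * B * Γ) * A = A * (B + Γ * B * Γ) := by
        linear_combination (norm := module) hTB' + hSB'
      have hIX : Complex.I • ((Γ * B - B * Γ) * A) = Complex.I • (A * (Γ * B - B * Γ)) := by
        linear_combination (norm := module) hTB' - hSB'
      have hX : (Γ * B - B * Γ) * A = A * (Γ * B - B * Γ) :=
        smul_right_injective _ Complex.I_ne_zero hIX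
      -- combine
      have h1 := hY
      simp only [add_mul, mul_add, mul_assoc, hΓA, mul_neg, neg_mul, hr1, hr2, neg_neg] at h1
      have h2 := congrArg (fun X => Γ * X) hX
      simp only [sub_mul, mul_sub, mul_assoc, hΓA, mul_neg, neg_mul, hr1, hr2, neg_neg] at h2
      have goal' : A * B = -(Γ * (B * (A * Γ))) := by
        linear_combination (norm := module) ((1:ℂ)/2) • h2 - ((1:ℂ)/2) • h1
      have goal'' : Γ * B * Γ * A = -(Γ * (B * (A * Γ))) := by
        rw [mul_assoc, mul_assoc, hΓA, mul_neg, mul_neg]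
      rw [goal', goal'']
    constructor
    · rw [hUloc]
      constructor
      · rw [Set.mem_centralizer_iff]
        intro B hB
        have k : A * (Γ * B * Γ) = B * A := by
          rw [key _ (hPΓ B hB), hsand]
        calc B * (A * V) = (A * (Γ * B * Γ)) * V := by rw [k, mul_assoc]
        _ = A * (Γ * B * Γ * V) := by noncomm_ring
        _ = A * (V * B) := by rw [hVB B hB]
        _ = (A * V) * B := by noncomm_ring
      · rw [Set.mem_centralizer_iff]
        intro D hD
        have k : D * A = A * D := Set.mem_centralizer_iff.mp hA2 D hD
        calc D * (A * V) = (D * A) * V := by noncomm_ring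
        _ = A * (D * V) := by rw [k]; noncomm_ring
        _ = A * (V * D) := by rw [hVD D hD]
        _ = (A * V) * D := by noncomm_ring
    · calc Γ * (A * V) * Γ = Γ * A * (V * Γ) := by noncomm_ring
      _ = Γ * A * (Γ * V) := by rw [hVΓ]
      _ = (Γ * A * Γ) * V := by noncomm_ring
      _ = -(A * V) := by rw [hodd]; noncomm_ring
  -- BACKWARD DIRECTION
  have backward : ∀ B ∈ Uloc, Γ * B * Γ = -B →
      B * W ∈ F ∧ Γ * (B * W) * Γ = -(B * W) := by
    intro B hB hodd
    rw [hUloc] at hB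
    obtain ⟨hB1, hB2⟩ := hB
    have hΓB : Γ * B = -(B * Γ) := by
      have h := congrArg (fun X => X * Γ) hodd
      rw [mul_assoc, mul_assoc, hΓ2, mul_one, neg_mul] at h
      exact h
    constructor
    · rw [hF]
      constructor
      · rw [Set.mem_centralizer_iff]
        rintro g ⟨C, hC, rfl⟩
        simp only
        have hCB : C * B = B * C := Set.mem_centralizer_iff.mp hB1 C hC
        have hCB' : (Γ * C * Γ) * B = B * (Γ * C * Γ) :=
          Set.mem_centralizer_iff.mp hB1 _ (hPΓ C hC)
        -- Y part
        have hYc : (C + Γ * C * Γ) * (B * W) = (B * W) * (C + Γ * C * Γ) := by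
          have hWY : W * (C + Γ * C * Γ) = (C + Γ * C * Γ) * W := by
            rw [mul_add, add_mul, hWB C hC, hWB _ (hPΓ C hC), hsand]; abel
          calc (C + Γ * C * Γ) * (B * W) = ((C + Γ * C * Γ) * B) * W := by noncomm_ring
          _ = (B * (C + Γ * C * Γ)) * W := by rw [add_mul, hCB, hCB', ← mul_add]
          _ = B * ((C + Γ * C * Γ) * W) := by noncomm_ring
          _ = B * (W * (C + Γ * C * Γ)) := by rw [hWY]
          _ = (B * W) * (C + Γ * C * Γ) := by noncomm_ring
        -- X part
        have hXc : (Γ * C - C * Γ) * (B * W) = (B * W) * (Γ * C - C * Γ) := by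
          have hWX : W * (Γ * C - C * Γ) = -((Γ * C - C * Γ) * W) := by
            have e1 : W * (Γ * C) = C * Γ * W := by
              calc W * (Γ * C) = Γ * (W * C) := by rw [← mul_assoc, hWΓ, mul_assoc]
              _ = Γ * (Γ * C * Γ * W) := by rw [hWB C hC]
              _ = C * Γ * W := by simp only [← mul_assoc]; rw [hΓ2, one_mul]
            have e2 : W * (C * Γ) = Γ * C * W := by
              calc W * (C * Γ) = (Γ * C * Γ * W) * Γ := by rw [← mul_assoc, hWB C hC]
              _ = Γ * C * Γ * (Γ * W) := by rw [mul_assoc, hWΓ]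
              _ = Γ * C * W := by rw [← mul_assoc, hΓΓr]
            rw [mul_sub, e1, e2, sub_mul]; abel
          have hBX : B * (Γ * C - C * Γ) = -((Γ * C - C * Γ) * B) := by
            have hBΓ : B * Γ = -(Γ * B) := by rw [hΓB, neg_neg]
            have e1 : B * (Γ * C) = -(Γ * C * B) := by
              rw [← mul_assoc, hBΓ, neg_mul, mul_assoc, ← hCB, ← mul_assoc]
            have e2 : B * (C * Γ) = -(C * Γ * B) := by
              rw [← mul_assoc, ← hCB, mul_assoc, hBΓ, mul_neg, ← mul_assoc]
            rw [mul_sub, e1, e2, sub_mul]; abel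
          calc (Γ * C - C * Γ) * (B * W) = ((Γ * C - C * Γ) * B) * W := by noncomm_ring
          _ = (-(B * (Γ * C - C * Γ))) * W := by rw [hBX, neg_neg]
          _ = B * (-((Γ * C - C * Γ) * W)) := by noncomm_ring
          _ = B * (W * (Γ * C - C * Γ)) := by rw [hWX]
          _ = (B * W) * (Γ * C - C * Γ) := by noncomm_ring
        rw [twist C]
        simp only [add_mul, smul_mul_assoc, mul_add, mul_smul_comm, hYc, hXc]
      · rw [Set.mem_centralizer_iff]
        intro D hD
        have k : D * B = B * D := Set.mem_centralizer_iff.mp hB2 D hD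
        calc D * (B * W) = (D * B) * W := by noncomm_ring
        _ = B * (D * W) := by rw [k]; noncomm_ring
        _ = B * (W * D) := by rw [hWD D hD]
        _ = (B * W) * D := by noncomm_ring
    · calc Γ * (B * W) * Γ = Γ * B * (W * Γ) := by noncomm_ring
      _ = Γ * B * (Γ * W) := by rw [hWΓ]
      _ = (Γ * B * Γ) * W := by noncomm_ring
      _ = -(B * W) := by rw [hodd]; noncomm_ring
  refine ⟨forward, backward, ?_, ?_, ?_⟩
  · rintro A ⟨hA, hodd⟩
    exact forward A hA hodd
  · rintro A1 ⟨hA1, _⟩ A2 ⟨hA2, _⟩ h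
    simp only at h
    have := congrArg (fun X => X * W) h
    simpa only [mul_assoc, hVW, mul_one] using this
  · rintro B ⟨hB, hodd⟩
    obtain ⟨hmem, hodd'⟩ := backward B hB hodd
    refine ⟨B * W, ⟨hmem, hodd'⟩, ?_⟩
    simp only [mul_assoc, hWV, mul_one]
end

section
/- Let S be a bounded self-adjoint operator on a complex Hilbert space H and let ε > 0. Let C := ε⁻¹ · f(S), where f(λ) := sin(ελ) and f(S) is defined via the continuous functional calculus for the self-adjoint operator S. Then ‖C‖ ≤ ε⁻¹, and for every ψ ∈ H one has ‖Sψ − Cψ‖ ≤ ε ‖S²ψ‖. -/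
open Real

/-- Cubic bound: for `|x| ≤ 1`, `|x - sin x| ≤ |x|^3 / 4`. -/
lemma abs_sub_sin_le_cube {x : ℝ} (hx : |x| ≤ 1) : |x - Real.sin x| ≤ |x| ^ 3 / 4 := by
  have key : ∀ y : ℝ, 0 ≤ y → y ≤ 1 → |y - Real.sin y| ≤ y ^ 3 / 4 := by
    intro y hy0 hy1
    rcases eq_or_lt_of_le hy0 with h | h
    · simp [← h]
    · have h1 := Real.sin_gt_sub_cube h
      have h2 := Real.sin_le hy0
      rw [abs_of_nonneg (by linarith)]
      linarith [pow_nonneg hy0 3]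
  rcases le_total 0 x with hx0 | hx0
  · rw [abs_of_nonneg hx0] at hx ⊢
    exact key x hx0 hx
  · have hx' : |(-x)| ≤ 1 := by rwa [abs_neg]
    have h := key (-x) (by linarith) (by rwa [abs_of_nonneg (by linarith)] at hx')
    rw [Real.sin_neg, sub_neg_eq_add] at h
    rw [abs_of_nonpos hx0]
    have : |x - Real.sin x| = |-x + Real.sin x| := by rw [← abs_neg]; ring_nf
    calc |x - Real.sin x| = |-x + Real.sin x| := this
      _ ≤ (-x) ^ 3 / 4 := h
      _ = (-x) ^ 3 / 4 := rfl

/-- Quadratic bound: `|x - sin x| ≤ x^2` for all real `x`. -/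
lemma abs_sub_sin_le_sq (x : ℝ) : |x - Real.sin x| ≤ x ^ 2 := by
  have key : ∀ y : ℝ, 0 ≤ y → |y - Real.sin y| ≤ y ^ 2 := by
    intro y hy0
    have hs := Real.sin_le hy0
    rw [abs_of_nonneg (by linarith)]
    rcases le_total y 1 with h1 | h1
    · have := abs_sub_sin_le_cube (x := y) (by rw [abs_of_nonneg hy0]; exact h1)
      rw [abs_of_nonneg (by linarith), abs_of_nonneg hy0] at this
      nlinarith
    · rcases le_total y Real.pi with hp | hp
      · have := Real.sin_nonneg_of_nonneg_of_le_pi hy0 hp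
        nlinarith
      · have := Real.neg_one_le_sin y
        have h3 := Real.pi_gt_three
        nlinarith
  rcases le_total 0 x with hx | hx
  · exact key x hx
  · have h := key (-x) (by linarith)
    rw [Real.sin_neg, sub_neg_eq_add, neg_sq] at h
    have : |x - Real.sin x| = |-x + Real.sin x| := by rw [← abs_neg]; ring_nf
    rw [this]; exact h

/-- Let `S` be a bounded self-adjoint operator on a complex Hilbert space `H`
and `ε > 0`. Let `C := ε⁻¹ · f(S)` where `f(λ) := sin(ελ)` (continuous functional calculus).
Then `‖C‖ ≤ ε⁻¹` and for every `ψ ∈ H` one has `‖Sψ − Cψ‖ ≤ ε ‖S²ψ‖`. -/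
theorem sine_approximation_of_selfAdjoint
    {H : Type*} [NormedAddCommGroup H] [InnerProductSpace ℂ H] [CompleteSpace H]
    (S : H →L[ℂ] H) (hS : IsSelfAdjoint S)
    (ε : ℝ) (hε : 0 < ε)
    (C : H →L[ℂ] H) (hC : C = ε⁻¹ • cfc (fun l : ℝ => Real.sin (ε * l)) S) :
    ‖C‖ ≤ ε⁻¹ ∧ ∀ ψ : H, ‖S ψ - C ψ‖ ≤ ε * ‖(S * S) ψ‖ := by
  have hεinv : (0:ℝ) ≤ ε⁻¹ := by positivity
  have hnorm_f : ‖cfc (fun l : ℝ => Real.sin (ε * l)) S‖ ≤ 1 :=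
    norm_cfc_le zero_le_one (fun x _ => by
      rw [Real.norm_eq_abs]; exact abs_le.mpr ⟨Real.neg_one_le_sin _, Real.sin_le_one _⟩)
  have hCnorm : ‖C‖ ≤ ε⁻¹ := by
    rw [hC, norm_smul, Real.norm_eq_abs, abs_of_nonneg hεinv]
    nlinarith [norm_nonneg (cfc (fun l : ℝ => Real.sin (ε * l)) S)]
  refine ⟨hCnorm, fun ψ => ?_⟩
  set g : ℝ → ℝ := fun l => l - ε⁻¹ * Real.sin (ε * l) with hg
  set h : ℝ → ℝ := fun l => if l = 0 then 0 else g l / l ^ 2 with hh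
  -- rewriting g as ε⁻¹ (εl - sin(εl))
  have hgeq : ∀ l : ℝ, g l = ε⁻¹ * (ε * l - Real.sin (ε * l)) := by
    intro l; rw [hg]; field_simp
  -- global bound |h l| ≤ ε
  have hbound : ∀ l : ℝ, |h l| ≤ ε := by
    intro l
    by_cases hl : l = 0
    · simp [hh, hl, hε.le]
    · have hl2 : (0:ℝ) < l ^ 2 := by positivity
      have h1 := abs_sub_sin_le_sq (ε * l)
      have : |g l| ≤ ε * l ^ 2 := by
        rw [hgeq l, abs_mul, abs_of_nonneg hεinv]
        calc ε⁻¹ * |ε * l - Real.sin (ε * l)| ≤ ε⁻¹ * (ε * l) ^ 2 := by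
              apply mul_le_mul_of_nonneg_left h1 hεinv
          _ = ε * l ^ 2 := by field_simp
      simp only [hh, if_neg hl, abs_div, abs_pow, sq_abs]
      rw [div_le_iff₀ hl2]
      linarith
  -- factorization g l = h l * l^2
  have hfac : ∀ l : ℝ, g l = h l * l ^ 2 := by
    intro l
    by_cases hl : l = 0
    · simp [hh, hg, hl]
    · simp only [hh, if_neg hl]
      field_simp
  -- continuity of h
  have hcont : Continuous h := by
    rw [continuous_iff_continuousAt]
    intro x
    by_cases hx : x = 0
    · subst hx
      have h0 : h 0 = 0 := by simp [hh]
      rw [ContinuousAt, h0]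
      have hev : ∀ᶠ l in nhds (0:ℝ), ‖h l‖ ≤ (ε ^ 2 / 4) * |l| := by
        have hball : ∀ᶠ l in nhds (0:ℝ), |l| < ε⁻¹ := by
          have := Metric.ball_mem_nhds (0:ℝ) (by positivity : (0:ℝ) < ε⁻¹)
          filter_upwards [this] with l hl
          simpa [Real.dist_eq] using hl
        filter_upwards [hball] with l hl
        by_cases hl0 : l = 0
        · simp [hh, hl0]
        · have hεl : |ε * l| ≤ 1 := by
            rw [abs_mul, abs_of_nonneg hε.le]
            calc ε * |l| ≤ ε * ε⁻¹ := by nlinarith [abs_nonneg l]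
              _ = 1 := by field_simp
          have hcube := abs_sub_sin_le_cube hεl
          have hgl : |g l| ≤ ε ^ 2 * |l| ^ 3 / 4 := by
            rw [hgeq l, abs_mul, abs_of_nonneg hεinv]
            calc ε⁻¹ * |ε * l - Real.sin (ε * l)| ≤ ε⁻¹ * (|ε * l| ^ 3 / 4) :=
                  mul_le_mul_of_nonneg_left hcube hεinv
              _ = ε ^ 2 * |l| ^ 3 / 4 := by
                  rw [abs_mul, abs_of_nonneg hε.le, mul_pow]
                  field_simp
          have hl2 : (0:ℝ) < l ^ 2 := by positivity
          simp only [hh, if_neg hl0, Real.norm_eq_abs, abs_div, abs_pow, sq_abs]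
          rw [div_le_iff₀ hl2]
          have : |l| ^ 3 = |l| * l ^ 2 := by
            rw [← sq_abs]; ring
          calc |g l| ≤ ε ^ 2 * |l| ^ 3 / 4 := hgl
            _ = ε ^ 2 / 4 * |l| * l ^ 2 := by rw [this]; ring
      refine squeeze_zero_norm' hev ?_
      have : ContinuousAt (fun l : ℝ => (ε ^ 2 / 4) * |l|) 0 := by fun_prop
      simpa using this.tendsto
    · have hgc : Continuous g := by
        rw [hg]; fun_prop
      have hca : ContinuousAt (fun l : ℝ => g l / l ^ 2) x := by
        apply ContinuousAt.div (hgc.continuousAt) (by fun_prop)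
        positivity
      apply hca.congr
      have hev : ∀ᶠ l in nhds x, l ≠ 0 := eventually_ne_nhds hx
      filter_upwards [hev] with l hl
      simp [hh, hl]
  -- operator identity : S - C = cfc h S * (S * S)
  have hgc : Continuous g := by rw [hg]; fun_prop
  have key : cfc g S = S - C := by
    have h1 : cfc g S = cfc (fun l : ℝ => l) S
        - cfc (fun l : ℝ => ε⁻¹ • Real.sin (ε * l)) S := by
      rw [← cfc_sub (fun l : ℝ => l) (fun l : ℝ => ε⁻¹ • Real.sin (ε * l)) S
        (by fun_prop) (by fun_prop)]
      apply cfc_congr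
      intro x _
      simp [hg, smul_eq_mul]
    rw [h1, cfc_id' ℝ S, cfc_smul ε⁻¹ (fun l : ℝ => Real.sin (ε * l)) S, hC]
  have key2 : cfc g S = cfc h S * (S * S) := by
    have h1 : cfc g S = cfc (fun l : ℝ => h l * l ^ 2) S :=
      cfc_congr (fun x _ => hfac x)
    rw [h1, cfc_mul _ _ S hcont.continuousOn (by fun_prop),
      cfc_pow_id S 2, pow_two]
  have hnorm_h : ‖cfc h S‖ ≤ ε := norm_cfc_le hε.le (fun x _ => by
    rw [Real.norm_eq_abs]; exact hbound x)
  have : S ψ - C ψ = (cfc h S) ((S * S) ψ) := by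
    rw [← ContinuousLinearMap.sub_apply, ← key, key2, ContinuousLinearMap.mul_apply]
  rw [this]
  calc ‖(cfc h S) ((S * S) ψ)‖ ≤ ‖cfc h S‖ * ‖(S * S) ψ‖ :=
        (cfc h S).le_opNorm _
    _ ≤ ε * ‖(S * S) ψ‖ := by
        apply mul_le_mul_of_nonneg_right hnorm_h (norm_nonneg _)
end
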